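/- arXiv:2109.13401 — 5 statements merged into one kernel-verified Lean document; each statement's English description precedes it below -/
import Mathlib

section
/- Let M be an n×n matrix with n ≥ 2. Then det(M) · det(M with rows 1,2 and columns 1,2 removed) = det(M with row 1, column 1 removed) · det(M with row 2, column 2 removed) − det(M with row 1, column 2 removed) · det(M with row 2, column 1 removed). -/
open Finset

/-- Determinant of the minor of the `ℕ`-indexed matrix `M` obtained by restricting to
rows `{0,...,n-1} \ I` and columns `{0,...,n-1} \ J` (in increasing order). -/
noncomputable def minorDet {R : Type*} [CommRing R] (M : Matrix ℕ ℕ R) (n : ℕ)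
    (I J : Finset ℕ) : R :=
  if h : (Finset.range n \ J).card = (Finset.range n \ I).card then
    Matrix.det (Matrix.of fun i j : Fin (Finset.range n \ I).card =>
      M (((Finset.range n \ I).orderIsoOfFin rfl i : ℕ))
        (((Finset.range n \ J).orderIsoOfFin h j : ℕ)))
  else 0

open Matrix in
private lemma minorDet_eq {R : Type*} [CommRing R] (M : Matrix ℕ ℕ R) (n k : ℕ) (I J : Finset ℕ)
    (hI : (Finset.range n \ I).card = k) (hJ : (Finset.range n \ J).card = k)
    (f g : Fin k → ℕ) (hf : StrictMono f) (hg : StrictMono g)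
    (hfm : ∀ i, f i ∈ Finset.range n \ I) (hgm : ∀ i, g i ∈ Finset.range n \ J) :
    minorDet M n I J = (Matrix.of fun i j : Fin k => M (f i) (g j)).det := by
  subst hI
  rw [minorDet, dif_pos hJ]
  congr 1
  ext i j
  simp only [Matrix.of_apply, Finset.coe_orderIsoOfFin_apply]
  rw [Finset.orderEmbOfFin_unique rfl hfm hf, Finset.orderEmbOfFin_unique hJ hgm hg]

open Matrix in
private lemma key_domain {R : Type*} [CommRing R] [IsDomain R] (n : ℕ)
    (A : Matrix (Fin (n+2)) (Fin (n+2)) R) (hA : A.det ≠ 0) :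
    A.det * (A.submatrix (fun i : Fin n => i.succ.succ) (fun j : Fin n => j.succ.succ)).det =
      (A.submatrix (Fin.succAbove 0) (Fin.succAbove 0)).det *
        (A.submatrix (Fin.succAbove 1) (Fin.succAbove 1)).det -
      (A.submatrix (Fin.succAbove 0) (Fin.succAbove 1)).det *
        (A.submatrix (Fin.succAbove 1) (Fin.succAbove 0)).det := by
  classical
  obtain ⟨e, he0, he1, her⟩ : ∃ e : Fin 2 ⊕ Fin n ≃ Fin (n+2),
      e (Sum.inl 0) = 0 ∧ e (Sum.inl 1) = 1 ∧ ∀ i : Fin n, e (Sum.inr i) = i.succ.succ :=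
    ⟨finSumFinEquiv.trans (finCongr (by omega)), by ext; simp, by ext; simp,
      fun i => by ext; simp⟩
  set B : Matrix (Fin 2) (Fin 2) R := Matrix.of fun k l => A.adjugate (e (Sum.inl k)) (e (Sum.inl l)) with hB
  set X : Matrix (Fin 2 ⊕ Fin n) (Fin 2 ⊕ Fin n) R :=
    Matrix.fromBlocks B 0 (Matrix.of fun i l => A.adjugate (e (Sum.inr i)) (e (Sum.inl l))) 1 with hX
  have hmul : (A.submatrix e e) * X =
      Matrix.fromBlocks (A.det • 1) (Matrix.of fun k j => A (e (Sum.inl k)) (e (Sum.inr j)))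
        0 (Matrix.of fun i j => A (e (Sum.inr i)) (e (Sum.inr j))) := by
    ext i j
    have hcol : ∀ (i : Fin 2 ⊕ Fin n) (l : Fin 2),
        ((A.submatrix e e) * X) i (Sum.inl l) = A.det * (if e i = e (Sum.inl l) then 1 else 0) := by
      intro i l
      have : ((A.submatrix e e) * X) i (Sum.inl l)
          = ∑ k : Fin 2 ⊕ Fin n, A (e i) (e k) * A.adjugate (e k) (e (Sum.inl l)) := by
        rw [Matrix.mul_apply]
        refine Finset.sum_congr rfl fun k _ => ?_
        cases k <;> simp [hX, hB, Matrix.fromBlocks]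
      rw [this]
      have hsum : (∑ k : Fin 2 ⊕ Fin n, A (e i) (e k) * A.adjugate (e k) (e (Sum.inl l)))
          = ∑ k : Fin (n+2), A (e i) k * A.adjugate k (e (Sum.inl l)) := Equiv.sum_comp e (fun k => A (e i) k * A.adjugate k (e (Sum.inl l)))
      rw [hsum]
      have := Matrix.mul_adjugate A
      have h2 : (A * A.adjugate) (e i) (e (Sum.inl l)) = A.det * (if e i = e (Sum.inl l) then 1 else 0) := by
        rw [this]; simp [Matrix.one_apply, Matrix.smul_apply, mul_ite]
      rw [← h2, Matrix.mul_apply]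
    have hcolr : ∀ (i : Fin 2 ⊕ Fin n) (l : Fin n),
        ((A.submatrix e e) * X) i (Sum.inr l) = A (e i) (e (Sum.inr l)) := by
      intro i l
      rw [Matrix.mul_apply]
      rw [Finset.sum_eq_single (Sum.inr l)]
      · simp [hX, Matrix.fromBlocks]
      · intro k _ hk
        cases k with
        | inl k => simp [hX, Matrix.fromBlocks]
        | inr k =>
          have : k ≠ l := fun h => hk (by rw [h])
          simp [hX, Matrix.fromBlocks, Matrix.one_apply, this]
      · simp
    cases i with
    | inl i =>
      cases j with
      | inl j =>
        rw [hcol]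
        simp [Matrix.fromBlocks, Matrix.one_apply, e.injective.eq_iff, Matrix.smul_apply, mul_ite]
      | inr j => rw [hcolr]; simp [Matrix.fromBlocks]
    | inr i =>
      cases j with
      | inl j =>
        rw [hcol]
        simp [Matrix.fromBlocks, e.injective.eq_iff]
      | inr j => rw [hcolr]; simp [Matrix.fromBlocks]
  have hdet := congr_arg Matrix.det hmul
  rw [Matrix.det_mul, Matrix.det_submatrix_equiv_self, Matrix.det_fromBlocks_zero₂₁] at hdet
  rw [hX, Matrix.det_fromBlocks_zero₁₂, Matrix.det_one, mul_one] at hdet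
  have hsmul : (A.det • (1 : Matrix (Fin 2) (Fin 2) R)).det = A.det ^ 2 := by
    rw [Matrix.det_smul]; simp
  rw [hsmul] at hdet
  have hinner : (Matrix.of fun i j : Fin n => A (e (Sum.inr i)) (e (Sum.inr j)))
      = A.submatrix (fun i : Fin n => i.succ.succ) (fun j : Fin n => j.succ.succ) := by
    ext i j; simp [her]
  rw [hinner] at hdet
  have hcancel : A.det * (A.submatrix (fun i : Fin n => i.succ.succ) (fun j : Fin n => j.succ.succ)).det = B.det := by
    apply mul_left_cancel₀ hA
    rw [hdet]; ring
  rw [hcancel, hB, Matrix.det_fin_two]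
  simp only [Matrix.of_apply, he0, he1]
  rw [Matrix.adjugate_fin_succ_eq_det_submatrix, Matrix.adjugate_fin_succ_eq_det_submatrix,
    Matrix.adjugate_fin_succ_eq_det_submatrix, Matrix.adjugate_fin_succ_eq_det_submatrix]
  simp [Fin.val_zero, Fin.val_one]
  ring

open Matrix in
private lemma key_general {R : Type*} [CommRing R] (n : ℕ)
    (A : Matrix (Fin (n+2)) (Fin (n+2)) R) :
    A.det * (A.submatrix (fun i : Fin n => i.succ.succ) (fun j : Fin n => j.succ.succ)).det =
      (A.submatrix (Fin.succAbove 0) (Fin.succAbove 0)).det *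
        (A.submatrix (Fin.succAbove 1) (Fin.succAbove 1)).det -
      (A.submatrix (Fin.succAbove 0) (Fin.succAbove 1)).det *
        (A.submatrix (Fin.succAbove 1) (Fin.succAbove 0)).det := by
  classical
  set S := MvPolynomial (Fin (n+2) × Fin (n+2)) ℤ
  set X : Matrix (Fin (n+2)) (Fin (n+2)) S := Matrix.mvPolynomialX (Fin (n+2)) (Fin (n+2)) ℤ
  set φ : S →+* R := (MvPolynomial.eval₂Hom (Int.castRingHom R) fun p => A p.1 p.2)
  have hXA : X.map φ = A := Matrix.mvPolynomialX_map_eval₂ (Int.castRingHom R) A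
  have hkey := key_domain n X (Matrix.det_mvPolynomialX_ne_zero (Fin (n+2)) ℤ)
  have hφ := congr_arg φ hkey
  simp only [_root_.map_mul, map_sub] at hφ
  have hmap : ∀ (m : ℕ) (N : Matrix (Fin m) (Fin m) S), φ N.det = (N.map φ).det := by
    intro m N; rw [RingHom.map_det]; rfl
  have hd : ∀ (f g : Fin (n+1) → Fin (n+2)), φ (X.submatrix f g).det = (A.submatrix f g).det := by
    intro f g
    rw [hmap, ← Matrix.submatrix_map, hXA]
  have hd2 : ∀ (f g : Fin n → Fin (n+2)), φ (X.submatrix f g).det = (A.submatrix f g).det := by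
    intro f g
    rw [hmap, ← Matrix.submatrix_map, hXA]
  have hdA : φ X.det = A.det := by rw [hmap, hXA]
  rw [hdA, hd2, hd, hd, hd, hd] at hφ
  exact hφ


/-- **Dodgson's identity.** For an `n × n` matrix with `n ≥ 2`,
`det M · det M_{{1,2},{1,2}} = det M_{1,1} det M_{2,2} − det M_{1,2} det M_{2,1}`
(rows/columns `1,2` of the paper are indices `0,1` here). -/
theorem dodgson_identity {R : Type*} [CommRing R] (n : ℕ) (hn : 2 ≤ n)
    (M : Matrix ℕ ℕ R) :
    minorDet M n ∅ ∅ * minorDet M n {0, 1} {0, 1} =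
      minorDet M n {0} {0} * minorDet M n {1} {1} -
        minorDet M n {0} {1} * minorDet M n {1} {0} := by
  obtain ⟨m, rfl⟩ : ∃ m, n = m + 2 := ⟨n - 2, by omega⟩
  set A : Matrix (Fin (m+2)) (Fin (m+2)) R := Matrix.of fun i j => M i j with hA
  have c0 : (Finset.range (m+2) \ (∅ : Finset ℕ)).card = m+2 := by simp
  have c1 : ∀ a : Fin (m+2), (Finset.range (m+2) \ ({(a : ℕ)} : Finset ℕ)).card = m+1 := by
    intro a
    rw [Finset.card_sdiff_of_subset (by simpa using a.is_lt)]
    simp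
  have c2 : (Finset.range (m+2) \ ({0, 1} : Finset ℕ)).card = m := by
    rw [Finset.card_sdiff_of_subset (by simp [Finset.insert_subset_iff])]
    simp
  have hmem : ∀ (a : Fin (m+2)) (i : Fin (m+1)),
      ((a.succAbove i : Fin (m+2)) : ℕ) ∈ Finset.range (m+2) \ ({(a : ℕ)} : Finset ℕ) := by
    intro a i
    simp only [Finset.mem_sdiff, Finset.mem_range, Finset.mem_singleton]
    exact ⟨(a.succAbove i).is_lt, fun h => Fin.succAbove_ne a i (Fin.val_injective h)⟩
  have hsa : ∀ a : Fin (m+2), StrictMono (fun i : Fin (m+1) => ((a.succAbove i : Fin (m+2)) : ℕ)) :=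
    fun a => Fin.val_strictMono.comp (Fin.strictMono_succAbove a)
  have e00 : minorDet M (m+2) ∅ ∅ = A.det := by
    rw [minorDet_eq M (m+2) (m+2) ∅ ∅ c0 c0 (fun i => (i : ℕ)) (fun i => (i : ℕ))
      Fin.val_strictMono Fin.val_strictMono (fun i => by simp [i.is_lt])
      (fun i => by simp [i.is_lt])]
  have eab : ∀ a b : Fin (m+2), minorDet M (m+2) {(a : ℕ)} {(b : ℕ)} =
      (A.submatrix a.succAbove b.succAbove).det := by
    intro a b
    rw [minorDet_eq M (m+2) (m+1) {(a : ℕ)} {(b : ℕ)} (c1 a) (c1 b)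
      (fun i => ((a.succAbove i : Fin (m+2)) : ℕ)) (fun i => ((b.succAbove i : Fin (m+2)) : ℕ))
      (hsa a) (hsa b) (hmem a) (hmem b)]
    rfl
  have e11 : minorDet M (m+2) {0, 1} {0, 1} =
      (A.submatrix (fun i : Fin m => i.succ.succ) (fun j : Fin m => j.succ.succ)).det := by
    rw [minorDet_eq M (m+2) m {0, 1} {0, 1} c2 c2
      (fun i => (i : ℕ) + 2) (fun i => (i : ℕ) + 2)
      (fun i j h => Nat.add_lt_add_right (Fin.val_strictMono h) 2)
      (fun i j h => Nat.add_lt_add_right (Fin.val_strictMono h) 2)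
      (fun i => by
        have := i.is_lt
        simp only [Finset.mem_sdiff, Finset.mem_range, Finset.mem_insert, Finset.mem_singleton]
        omega)
      (fun i => by
        have := i.is_lt
        simp only [Finset.mem_sdiff, Finset.mem_range, Finset.mem_insert, Finset.mem_singleton]
        omega)]
    rfl
  have E00 := eab 0 0
  have E11 := eab 1 1
  have E01 := eab 0 1
  have E10 := eab 1 0
  simp only [Fin.val_zero, Fin.val_one] at E00 E11 E01 E10
  rw [e00, e11, E00, E11, E01, E10]
  exact key_general m A
end

section
/- Let M be an n×n matrix with n ≥ k, and fix j with 1 ≤ j ≤ k. Then det(M) · det(M_{[k],[k]}) = Σ_{i=1}^{k} (−1)^{i+j} det(M_{\{i\},\{j\}}) · det(M_{[k]\setminus\{i\}, [k]\setminus\{j\}}). -/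
open Finset

namespace ColExp

variable {R : Type*} [CommRing R]

lemma minorDet_eq_det (M : Matrix ℕ ℕ R) (n c : ℕ) (I J : Finset ℕ)
    (hI : (Finset.range n \ I).card = c) (hJ : (Finset.range n \ J).card = c)
    (f g : Fin c → ℕ) (hf : StrictMono f) (hg : StrictMono g)
    (hfm : ∀ x, f x ∈ Finset.range n \ I) (hgm : ∀ x, g x ∈ Finset.range n \ J) :
    minorDet M n I J = Matrix.det (Matrix.of fun a b : Fin c => M (f a) (g b)) := by
  subst hI
  have hJ' : (Finset.range n \ J).card = (Finset.range n \ I).card := hJ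
  rw [minorDet, dif_pos hJ']
  have hf' := Finset.orderEmbOfFin_unique (rfl : (Finset.range n \ I).card = _) hfm hf
  have hg' := Finset.orderEmbOfFin_unique hJ' hgm hg
  congr 1
  ext a b
  simp only [Matrix.of_apply, Finset.coe_orderIsoOfFin_apply, ← hf', ← hg']

def fkmap (N k : ℕ) (t : Fin (N + 1 - k)) : Fin (N + 1) :=
  ⟨k + t, by have := t.isLt; omega⟩

def gmap (N k : ℕ) (hk : k ≤ N + 1) (i : Fin (N + 1)) (t : Fin (N + 1 - k + 1)) :
    Fin (N + 1) :=
  if t = 0 then i else ⟨k + (t : ℕ) - 1, by have := t.isLt; omega⟩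

lemma gmap_zero (N k : ℕ) (hk : k ≤ N + 1) (i : Fin (N + 1)) :
    gmap N k hk i 0 = i := by simp [gmap]

lemma gmap_val_ne (N k : ℕ) (hk : k ≤ N + 1) (i : Fin (N + 1))
    {t : Fin (N + 1 - k + 1)} (ht : t ≠ 0) :
    (gmap N k hk i t : ℕ) = k + (t : ℕ) - 1 := by simp [gmap, ht]

lemma gmap_ne_of_lt (N k : ℕ) (hk : k ≤ N + 1) (i jf : Fin (N + 1))
    (hjk : (jf : ℕ) < k) {t : Fin (N + 1 - k + 1)} (ht : t ≠ 0) :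
    gmap N k hk i t ≠ jf := by
  intro h
  have h1 : (gmap N k hk i t : ℕ) = (jf : ℕ) := congrArg Fin.val h
  rw [gmap_val_ne N k hk i ht] at h1
  have ht' : (t : ℕ) ≠ 0 := fun h0 => ht (Fin.ext h0)
  omega

lemma det_updateRow_linear {m ι : Type*} [DecidableEq m] [Fintype m] [Fintype ι]
    (T : Matrix m m R) (r : m) (s : Finset ι) (c : ι → R) (v : ι → m → R) :
    Matrix.det (T.updateRow r (∑ i ∈ s, c i • v i)) =
      ∑ i ∈ s, c i * Matrix.det (T.updateRow r (v i)) := by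
  classical
  induction s using Finset.induction_on with
  | empty =>
      rw [Finset.sum_empty, Finset.sum_empty,
        show (0 : m → R) = (0 : R) • (0 : m → R) from (zero_smul _ _).symm,
        Matrix.det_updateRow_smul, zero_mul]
  | insert a s ha ih =>
      rw [Finset.sum_insert ha, Finset.sum_insert ha, Matrix.det_updateRow_add,
        Matrix.det_updateRow_smul, ih]

lemma core (N k : ℕ) (hk : k ≤ N + 1) (jf : Fin (N + 1)) (hjk : (jf : ℕ) < k)
    (A : Matrix (Fin (N + 1)) (Fin (N + 1)) R) :
    A.det * (A.submatrix (fkmap N k) (fkmap N k)).det =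
      ∑ i : Fin (N + 1), (-1 : R) ^ ((i : ℕ) + (jf : ℕ)) *
        (A.submatrix i.succAbove jf.succAbove).det *
        (A.submatrix (gmap N k hk i) (gmap N k hk jf)).det := by
  classical
  set u : Fin (N + 1) → R := fun i =>
    (-1 : R) ^ ((i : ℕ) + (jf : ℕ)) * (A.submatrix i.succAbove jf.succAbove).det with hu
  set w : Fin (N + 1) → R := fun c => ∑ i, u i * A i c with hw
  have key : ∀ c, w c = (A.updateCol jf (fun r => A r c)).det := by
    intro c
    rw [Matrix.det_succ_column _ jf]
    apply Finset.sum_congr rfl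
    intro i _
    rw [Matrix.updateCol_self]
    have hsub : (A.updateCol jf fun r => A r c).submatrix i.succAbove jf.succAbove =
        A.submatrix i.succAbove jf.succAbove := by
      ext a b
      simp only [Matrix.submatrix_apply]
      rw [Matrix.updateCol_ne (Fin.succAbove_ne jf b)]
    rw [hsub, hu]
    ring
  have hwj : w jf = A.det := by
    rw [key, Matrix.updateCol_eq_self]
  have hwne : ∀ c, c ≠ jf → w c = 0 := by
    intro c hc
    rw [key]
    exact Matrix.det_updateCol_eq_zero hc
  set gj : Fin (N + 1 - k + 1) → Fin (N + 1) := gmap N k hk jf with hgj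
  set S : Matrix (Fin (N + 1 - k + 1)) (Fin (N + 1 - k + 1)) R :=
    (A.updateRow jf w).submatrix gj gj with hS
  have hrow0 : ∀ b, S 0 b = if b = 0 then A.det else 0 := by
    intro b
    show (A.updateRow jf w) (gj 0) (gj b) = _
    rw [hgj, gmap_zero, Matrix.updateRow_self]
    by_cases hb : b = 0
    · subst hb; rw [gmap_zero, if_pos rfl, hwj]
    · rw [if_neg hb, hwne _ (gmap_ne_of_lt N k hk jf jf hjk hb)]
  have ha : S.det = A.det * (A.submatrix (fkmap N k) (fkmap N k)).det := by
    rw [Matrix.det_succ_row_zero S]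
    rw [Finset.sum_eq_single 0]
    · rw [hrow0 0, if_pos rfl]
      simp only [Fin.val_zero, pow_zero, one_mul]
      refine congrArg (fun X => A.det * Matrix.det X) ?_
      ext a b
      show (A.updateRow jf w) (gj a.succ) (gj ((0 : Fin (N + 1 - k + 1)).succAbove b)) =
        A (fkmap N k a) (fkmap N k b)
      rw [Fin.zero_succAbove]
      rw [Matrix.updateRow_ne (gmap_ne_of_lt N k hk jf jf hjk (Fin.succ_ne_zero a))]
      congr 1
    · intro b _ hb
      rw [hrow0 b, if_neg hb, mul_zero, zero_mul]
    · intro h; exact absurd (Finset.mem_univ 0) h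
  have hb : S.det = ∑ i : Fin (N + 1), u i * (A.submatrix (gmap N k hk i) gj).det := by
    have hSeq : S = (A.submatrix gj gj).updateRow 0
        (∑ i : Fin (N + 1), u i • fun b => A i (gj b)) := by
      ext a b
      by_cases ha0 : a = 0
      · subst ha0
        rw [Matrix.updateRow_self]
        show (A.updateRow jf w) (gj 0) (gj b) = _
        rw [hgj, gmap_zero, Matrix.updateRow_self]
        simp [hw, Finset.sum_apply]
      · rw [Matrix.updateRow_ne ha0]
        show (A.updateRow jf w) (gj a) (gj b) = A (gj a) (gj b)
        rw [Matrix.updateRow_ne (gmap_ne_of_lt N k hk jf jf hjk ha0)]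
    rw [hSeq, det_updateRow_linear]
    apply Finset.sum_congr rfl
    intro i _
    refine congrArg (fun X => u i * Matrix.det X) ?_
    ext a b
    by_cases ha0 : a = 0
    · subst ha0
      rw [Matrix.updateRow_self]
      show A i (gj b) = A (gmap N k hk i 0) (gj b)
      rw [gmap_zero]
    · rw [Matrix.updateRow_ne ha0]
      show A (gj a) (gj b) = A (gmap N k hk i a) (gj b)
      congr 1
      apply Fin.ext
      rw [hgj, gmap_val_ne N k hk jf ha0, gmap_val_ne N k hk i ha0]
  rw [← ha, hb]

lemma gdup (N k : ℕ) (hk : k ≤ N + 1) (i : Fin (N + 1)) (hik : k ≤ (i : ℕ))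
    (A : Matrix (Fin (N + 1)) (Fin (N + 1)) R) (h : Fin (N + 1 - k + 1) → Fin (N + 1)) :
    (A.submatrix (gmap N k hk i) h).det = 0 := by
  have hiN := i.isLt
  set t : Fin (N + 1 - k + 1) := ⟨(i : ℕ) - k + 1, by omega⟩ with hts
  have ht0 : t ≠ 0 := by
    intro hE
    have : ((i : ℕ) - k + 1 : ℕ) = 0 := congrArg Fin.val hE
    omega
  have hgt : gmap N k hk i t = i := by
    apply Fin.ext
    rw [gmap_val_ne N k hk i ht0]
    show k + ((i : ℕ) - k + 1) - 1 = (i : ℕ)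
    omega
  refine Matrix.det_zero_of_row_eq (show (0 : Fin (N + 1 - k + 1)) ≠ t from ?_) ?_
  · intro hE
    have : (0 : ℕ) = (i : ℕ) - k + 1 := congrArg Fin.val hE
    omega
  · funext b
    show A (gmap N k hk i 0) (h b) = A (gmap N k hk i t) (h b)
    rw [gmap_zero, hgt]

end ColExp

/-- **Column expansion identity** (Theorem 2.4): for an `n × n` matrix with `n ≥ k` and
a fixed column `j` with `1 ≤ j ≤ k` (0-based here; the sign `(−1)^{i+j}` has the same
parity in 0-based and 1-based indexing),
`det M · det M_{[k],[k]} = Σ_{i=1}^{k} (−1)^{i+j} det M_{{i},{j}} · det M_{[k]∖{i},[k]∖{j}}`. -/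
theorem column_expansion {R : Type*} [CommRing R] (n k j : ℕ) (hk : k ≤ n) (hj : j < k)
    (M : Matrix ℕ ℕ R) :
    minorDet M n ∅ ∅ * minorDet M n (Finset.range k) (Finset.range k) =
      ∑ i ∈ Finset.range k, (-1 : R) ^ (i + j) *
        (minorDet M n {i} {j} *
          minorDet M n (Finset.range k \ {i}) (Finset.range k \ {j})) := by
  classical
  obtain ⟨N, rfl⟩ : ∃ N, n = N + 1 := ⟨n - 1, by omega⟩
  have hj1 : j < N + 1 := lt_of_lt_of_le hj hk
  set A : Matrix (Fin (N + 1)) (Fin (N + 1)) R :=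
    Matrix.of (fun a b : Fin (N + 1) => M a b) with hA
  set jf : Fin (N + 1) := ⟨j, hj1⟩ with hjf
  have h1 : minorDet M (N + 1) ∅ ∅ = A.det := by
    rw [ColExp.minorDet_eq_det M (N + 1) (N + 1) ∅ ∅ (by simp) (by simp)
      (fun t => (t : ℕ)) (fun t => (t : ℕ)) (fun a b h => h) (fun a b h => h)
      (fun x => by simp [x.isLt]) (fun x => by simp [x.isLt])]
  have h2 : minorDet M (N + 1) (Finset.range k) (Finset.range k) =
      (A.submatrix (ColExp.fkmap N k) (ColExp.fkmap N k)).det := by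
    rw [ColExp.minorDet_eq_det M (N + 1) (N + 1 - k) (Finset.range k) (Finset.range k)
      (by rw [Finset.card_sdiff_of_subset (Finset.range_subset_range.mpr hk)]; simp)
      (by rw [Finset.card_sdiff_of_subset (Finset.range_subset_range.mpr hk)]; simp)
      (fun t => k + (t : ℕ)) (fun t => k + (t : ℕ))
      (fun a b h => Nat.add_lt_add_left h k) (fun a b h => Nat.add_lt_add_left h k)
      (fun x => by
        have := x.isLt
        simp only [Finset.mem_sdiff, Finset.mem_range]
        omega)
      (fun x => by
        have := x.isLt
        simp only [Finset.mem_sdiff, Finset.mem_range]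
        omega)]
    rfl
  have h3 : ∀ (i : ℕ) (hi : i < N + 1),
      minorDet M (N + 1) {i} {j} =
        (A.submatrix (Fin.succAbove ⟨i, hi⟩) jf.succAbove).det := by
    intro i hi
    rw [ColExp.minorDet_eq_det M (N + 1) N {i} {j}
      (by rw [Finset.card_sdiff_of_subset (Finset.singleton_subset_iff.mpr (Finset.mem_range.mpr hi))]
          simp)
      (by rw [Finset.card_sdiff_of_subset (Finset.singleton_subset_iff.mpr (Finset.mem_range.mpr hj1))]
          simp)
      (fun t => ((Fin.succAbove ⟨i, hi⟩ t : Fin (N + 1)) : ℕ))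
      (fun t => ((jf.succAbove t : Fin (N + 1)) : ℕ))
      (fun a b h => Fin.strictMono_succAbove _ h)
      (fun a b h => Fin.strictMono_succAbove _ h)
      (fun x => by
        simp only [Finset.mem_sdiff, Finset.mem_range, Finset.mem_singleton]
        exact ⟨(Fin.succAbove ⟨i, hi⟩ x).isLt,
          fun hE => (Fin.succAbove_ne ⟨i, hi⟩ x) (Fin.ext hE)⟩)
      (fun x => by
        simp only [Finset.mem_sdiff, Finset.mem_range, Finset.mem_singleton]
        exact ⟨(jf.succAbove x).isLt,
          fun hE => (Fin.succAbove_ne jf x) (Fin.ext hE)⟩)]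
    rfl
  have hmono : ∀ (x : Fin (N + 1)), (x : ℕ) < k →
      StrictMono (fun t => ((ColExp.gmap N k hk x t : Fin (N + 1)) : ℕ)) := by
    intro x hxk a b hab
    have hab' : (a : ℕ) < (b : ℕ) := hab
    have hb0 : b ≠ 0 := by
      rintro rfl
      simp at hab'
    have hbv : (b : ℕ) ≠ 0 := fun h0 => hb0 (Fin.ext h0)
    show ((ColExp.gmap N k hk x a : Fin (N + 1)) : ℕ) <
      ((ColExp.gmap N k hk x b : Fin (N + 1)) : ℕ)
    rw [ColExp.gmap_val_ne N k hk x hb0]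
    by_cases ha0 : a = 0
    · subst ha0
      rw [ColExp.gmap_zero]
      omega
    · rw [ColExp.gmap_val_ne N k hk x ha0]
      omega
  have hmem : ∀ (x : Fin (N + 1)), (x : ℕ) < k → ∀ t,
      ((ColExp.gmap N k hk x t : Fin (N + 1)) : ℕ) ∈
        Finset.range (N + 1) \ (Finset.range k \ {(x : ℕ)}) := by
    intro x hxk t
    simp only [Finset.mem_sdiff, Finset.mem_range, Finset.mem_singleton]
    by_cases ht0 : t = 0
    · subst ht0
      rw [ColExp.gmap_zero]
      exact ⟨x.isLt, fun ⟨_, h2⟩ => h2 rfl⟩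
    · rw [ColExp.gmap_val_ne N k hk x ht0]
      have := t.isLt
      constructor
      · omega
      · rintro ⟨hlt, -⟩
        have : (t : ℕ) ≠ 0 := fun h0 => ht0 (Fin.ext h0)
        omega
  have h4 : ∀ (i : ℕ) (hik : i < k) (hi : i < N + 1),
      minorDet M (N + 1) (Finset.range k \ {i}) (Finset.range k \ {j}) =
        (A.submatrix (ColExp.gmap N k hk ⟨i, hi⟩) (ColExp.gmap N k hk jf)).det := by
    intro i hik hi
    have hcard : ∀ (a : ℕ), a < k →
        (Finset.range (N + 1) \ (Finset.range k \ {a})).card = N + 1 - k + 1 := by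
      intro a ha
      rw [Finset.card_sdiff_of_subset
          (Finset.Subset.trans Finset.sdiff_subset (Finset.range_subset_range.mpr hk)),
        Finset.card_sdiff_of_subset (Finset.singleton_subset_iff.mpr (Finset.mem_range.mpr ha)),
        Finset.card_range, Finset.card_range, Finset.card_singleton]
      omega
    rw [ColExp.minorDet_eq_det M (N + 1) (N + 1 - k + 1)
      (Finset.range k \ {i}) (Finset.range k \ {j})
      (hcard i hik) (hcard j hj)
      (fun t => ((ColExp.gmap N k hk ⟨i, hi⟩ t : Fin (N + 1)) : ℕ))
      (fun t => ((ColExp.gmap N k hk jf t : Fin (N + 1)) : ℕ))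
      (hmono ⟨i, hi⟩ hik) (hmono jf hj)
      (hmem ⟨i, hi⟩ hik) (hmem jf hj)]
    rfl
  rw [h1, h2, ColExp.core N k hk jf hj]
  set G : ℕ → R := fun i =>
    if hi : i < N + 1 then
      (-1 : R) ^ (i + j) * (A.submatrix (Fin.succAbove ⟨i, hi⟩) jf.succAbove).det *
        (A.submatrix (ColExp.gmap N k hk ⟨i, hi⟩) (ColExp.gmap N k hk jf)).det
    else 0 with hG
  have step1 : ∑ i : Fin (N + 1), (-1 : R) ^ ((i : ℕ) + (jf : ℕ)) *
        (A.submatrix i.succAbove jf.succAbove).det *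
        (A.submatrix (ColExp.gmap N k hk i) (ColExp.gmap N k hk jf)).det
      = ∑ i ∈ Finset.range (N + 1), G i := by
    rw [← Fin.sum_univ_eq_sum_range G (N + 1)]
    apply Finset.sum_congr rfl
    intro i _
    simp only [hG]
    rw [dif_pos i.isLt]
  have step2 : ∑ i ∈ Finset.range (N + 1), G i = ∑ i ∈ Finset.range k, G i := by
    refine (Finset.sum_subset (Finset.range_subset_range.mpr hk) ?_).symm
    intro x hx hxk
    simp only [hG]
    rw [dif_pos (Finset.mem_range.mp hx)]
    rw [ColExp.gdup N k hk _
      (Nat.le_of_not_lt (fun hc => hxk (Finset.mem_range.mpr hc))) A, mul_zero]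
  rw [step1, step2]
  apply Finset.sum_congr rfl
  intro i hi
  have hik : i < k := Finset.mem_range.mp hi
  have hi1 : i < N + 1 := lt_of_lt_of_le hik hk
  simp only [hG]
  rw [dif_pos hi1, h3 i hi1, h4 i hik hi1]
  ring
end

section
/- For an n×n matrix M (entries in an integral domain, n ≥ 3), the three identities obtained from the column expansion formula for k = 3 all hold; in particular det(M)·det(M_{123,123}) = det(M_{1,1})det(M_{23,23}) − det(M_{2,1})det(M_{13,23}) + det(M_{3,1})det(M_{12,23}), and also det(M)·det(M_{123,123}) = −det(M_{1,2})det(M_{23,13}) + det(M_{2,2})det(M_{13,13}) − det(M_{3,2})det(M_{12,13}), and det(M)·det(M_{123,123}) = det(M_{1,3})det(M_{23,12}) − det(M_{2,3})det(M_{13,12}) + det(M_{3,3})det(M_{12,12}). -/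
open Finset

/-- Determinant of the submatrix of a block-indexed matrix keeping the first-block
rows selected by `a` and columns selected by `b`, and all second-block rows/columns. -/
noncomputable def dd {R : Type*} [CommRing R] {m k : ℕ}
    (X : Matrix (Fin 3 ⊕ Fin m) (Fin 3 ⊕ Fin m) R) (a b : Fin k → Fin 3) : R :=
  Matrix.det (X.submatrix (Sum.map a id) (Sum.map b id))

lemma schur_dd {R : Type*} [CommRing R] {m k : ℕ}
    (X : Matrix (Fin 3 ⊕ Fin m) (Fin 3 ⊕ Fin m) R)
    [Invertible (X.submatrix Sum.inr Sum.inr)] (a b : Fin k → Fin 3) :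
    dd X a b = Matrix.det (X.submatrix Sum.inr Sum.inr) *
      Matrix.det ((X.submatrix Sum.inl Sum.inl -
        X.submatrix Sum.inl Sum.inr * ⅟(X.submatrix Sum.inr Sum.inr) *
          X.submatrix Sum.inr Sum.inl).submatrix a b) := by
  have h1 : X.submatrix (Sum.map a id) (Sum.map b id) =
      Matrix.fromBlocks (X.submatrix (Sum.inl ∘ a) (Sum.inl ∘ b))
        (X.submatrix (Sum.inl ∘ a) Sum.inr) (X.submatrix Sum.inr (Sum.inl ∘ b))
        (X.submatrix Sum.inr Sum.inr) := by
    ext i j; cases i <;> cases j <;> rfl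
  rw [dd, h1, Matrix.det_fromBlocks₂₂]
  congr 1

/-- The three column-expansion identities, in block form. -/
def GIdent {R : Type*} [CommRing R] {m : ℕ}
    (X : Matrix (Fin 3 ⊕ Fin m) (Fin 3 ⊕ Fin m) R) : Prop :=
  (dd X ![0,1,2] ![0,1,2] * dd X ![] ![] =
      dd X ![1,2] ![1,2] * dd X ![0] ![0] -
        dd X ![0,2] ![1,2] * dd X ![1] ![0] +
          dd X ![0,1] ![1,2] * dd X ![2] ![0]) ∧
    (dd X ![0,1,2] ![0,1,2] * dd X ![] ![] =
      -(dd X ![1,2] ![0,2] * dd X ![0] ![1]) +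
        dd X ![0,2] ![0,2] * dd X ![1] ![1] -
          dd X ![0,1] ![0,2] * dd X ![2] ![1]) ∧
    (dd X ![0,1,2] ![0,1,2] * dd X ![] ![] =
      dd X ![1,2] ![0,1] * dd X ![0] ![2] -
        dd X ![0,2] ![0,1] * dd X ![1] ![2] +
          dd X ![0,1] ![0,1] * dd X ![2] ![2])

lemma gident_field {K : Type*} [Field K] {m : ℕ}
    (X : Matrix (Fin 3 ⊕ Fin m) (Fin 3 ⊕ Fin m) K)
    (hD : Matrix.det (X.submatrix Sum.inr Sum.inr) ≠ 0) : GIdent X := by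
  haveI : Invertible (X.submatrix Sum.inr Sum.inr) :=
    Matrix.invertibleOfIsUnitDet _ (isUnit_iff_ne_zero.2 hD)
  refine ⟨?_, ?_, ?_⟩ <;>
  · simp only [schur_dd]
    simp only [Matrix.det_fin_three, Matrix.det_fin_two, Matrix.det_fin_one,
      Matrix.det_isEmpty, Matrix.submatrix_apply, Matrix.cons_val_zero, Matrix.cons_val_one,
      Matrix.head_cons, Matrix.cons_val_two, Matrix.tail_cons, Matrix.cons_val_fin_one]
    ring

lemma dd_map {R S : Type*} [CommRing R] [CommRing S] (f : R →+* S) {m k : ℕ}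
    (X : Matrix (Fin 3 ⊕ Fin m) (Fin 3 ⊕ Fin m) R) (a b : Fin k → Fin 3) :
    dd (X.map f) a b = f (dd X a b) := by
  rw [dd, dd, RingHom.map_det]
  rfl

lemma GIdent.of_map {R S : Type*} [CommRing R] [CommRing S] {f : R →+* S}
    (hf : Function.Injective f) {m : ℕ}
    {X : Matrix (Fin 3 ⊕ Fin m) (Fin 3 ⊕ Fin m) R} (h : GIdent (X.map f)) : GIdent X := by
  obtain ⟨h1, h2, h3⟩ := h
  simp only [dd_map, ← _root_.map_mul, ← _root_.map_neg, ← _root_.map_sub,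
    ← _root_.map_add] at h1 h2 h3
  exact ⟨hf h1, hf h2, hf h3⟩

lemma GIdent.map {R S : Type*} [CommRing R] [CommRing S] (f : R →+* S) {m : ℕ}
    {X : Matrix (Fin 3 ⊕ Fin m) (Fin 3 ⊕ Fin m) R} (h : GIdent X) : GIdent (X.map f) := by
  obtain ⟨h1, h2, h3⟩ := h
  refine ⟨?_, ?_, ?_⟩ <;>
    simp only [dd_map, ← _root_.map_mul, ← _root_.map_neg, ← _root_.map_sub, ← _root_.map_add]
  exacts [congrArg f h1, congrArg f h2, congrArg f h3]

lemma gident_generic (m : ℕ) :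
    GIdent (R := MvPolynomial ((Fin 3 ⊕ Fin m) × (Fin 3 ⊕ Fin m)) ℤ)
      (Matrix.of fun p q => MvPolynomial.X (p, q)) := by
  classical
  set σ := MvPolynomial ((Fin 3 ⊕ Fin m) × (Fin 3 ⊕ Fin m)) ℤ with hσ
  set Y : Matrix (Fin 3 ⊕ Fin m) (Fin 3 ⊕ Fin m) σ :=
    Matrix.of fun p q => MvPolynomial.X (p, q) with hY
  let K := FractionRing σ
  have hinj : Function.Injective (algebraMap σ K) := IsFractionRing.injective σ K
  refine GIdent.of_map (f := algebraMap σ K) hinj ?_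
  refine gident_field _ ?_
  have hsub : (Y.map (algebraMap σ K)).submatrix Sum.inr Sum.inr =
      (Y.submatrix Sum.inr Sum.inr).map (algebraMap σ K) := rfl
  rw [hsub, ← RingHom.mapMatrix_apply, ← RingHom.map_det]
  intro hc
  have h0 : Matrix.det (Y.submatrix Sum.inr Sum.inr) = 0 := by
    apply hinj; rw [hc, map_zero]
  -- evaluate at the identity matrix to get a contradiction
  have h1 : (MvPolynomial.eval (fun pq : (Fin 3 ⊕ Fin m) × (Fin 3 ⊕ Fin m) =>
      if pq.1 = pq.2 then (1 : ℤ) else 0)) (Matrix.det (Y.submatrix Sum.inr Sum.inr)) = 1 := by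
    rw [RingHom.map_det, RingHom.mapMatrix_apply]
    have : (Y.submatrix Sum.inr Sum.inr).map (MvPolynomial.eval fun pq :
        (Fin 3 ⊕ Fin m) × (Fin 3 ⊕ Fin m) => if pq.1 = pq.2 then (1 : ℤ) else 0) =
        (1 : Matrix (Fin m) (Fin m) ℤ) := by
      ext i j
      simp only [Matrix.map_apply, Matrix.submatrix_apply, hY, Matrix.of_apply,
        MvPolynomial.eval_X, Matrix.one_apply]
      by_cases hij : i = j <;> simp [hij]
    rw [this, Matrix.det_one]
  rw [h0, map_zero] at h1
  exact zero_ne_one h1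

lemma gident_all {R : Type*} [CommRing R] {m : ℕ}
    (X : Matrix (Fin 3 ⊕ Fin m) (Fin 3 ⊕ Fin m) R) : GIdent X := by
  classical
  have h := GIdent.map ((MvPolynomial.aeval fun pq : (Fin 3 ⊕ Fin m) × (Fin 3 ⊕ Fin m) =>
      X pq.1 pq.2).toRingHom) (gident_generic m)
  have : (Matrix.of fun p q : Fin 3 ⊕ Fin m =>
      (MvPolynomial.X (p, q) : MvPolynomial _ ℤ)).map
      ((MvPolynomial.aeval fun pq : (Fin 3 ⊕ Fin m) × (Fin 3 ⊕ Fin m) =>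
        X pq.1 pq.2).toRingHom) = X := by
    ext p q
    simp [Matrix.map_apply]
  rwa [this] at h

/-- Realizes `inl i ↦ i`, `inr j ↦ j + 3` on indices. -/
def tn {m : ℕ} : Fin 3 ⊕ Fin m → ℕ := Sum.elim (fun i => (i : ℕ)) (fun j => (j : ℕ) + 3)

lemma orderEmb_apply {m t : ℕ} (ht : t ≤ 3) (I : Finset ℕ) (hI : I ⊆ Finset.range 3)
    (hIc : I.card = t) (a : Fin (3 - t) → Fin 3) (haI : ∀ i, (a i : ℕ) ∉ I)
    (haM : StrictMono a) {d : ℕ} (hd : (Finset.range (m + 3) \ I).card = d)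
    (h3 : 3 - t + m = d) (p : Fin (3 - t) ⊕ Fin m) :
    ((Finset.range (m + 3) \ I).orderEmbOfFin hd (finCongr h3 (finSumFinEquiv p)) : ℕ) =
      tn (Sum.map a id p) := by
  have hIr : I ⊆ Finset.range (m + 3) := hI.trans (Finset.range_subset_range.2 (by omega))
  have hdval : d = m + 3 - t := by
    rw [← hd, Finset.card_sdiff_of_subset hIr, Finset.card_range, hIc]
  let g : Fin d → ℕ := fun i => if h : (i : ℕ) < 3 - t then (a ⟨i, h⟩ : ℕ) else (i : ℕ) + t
  have hmem : ∀ x, g x ∈ Finset.range (m + 3) \ I := by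
    intro x
    rw [Finset.mem_sdiff, Finset.mem_range]
    by_cases h : (x : ℕ) < 3 - t
    · simp only [g, dif_pos h]
      exact ⟨lt_of_lt_of_le (a ⟨x, h⟩).isLt (by omega), haI _⟩
    · simp only [g, dif_neg h]
      have hx : (x : ℕ) < d := x.isLt
      refine ⟨by omega, fun hmem => ?_⟩
      have := Finset.mem_range.1 (hI hmem)
      omega
  have hmono : StrictMono g := by
    intro i j hij
    have hij' : (i : ℕ) < (j : ℕ) := hij
    by_cases hi : (i : ℕ) < 3 - t <;> by_cases hj : (j : ℕ) < 3 - t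
    · simp only [g, dif_pos hi, dif_pos hj]
      have : a ⟨i, hi⟩ < a ⟨j, hj⟩ := haM (by exact hij')
      exact_mod_cast this
    · simp only [g, dif_pos hi, dif_neg hj]
      have := (a ⟨i, hi⟩).isLt
      omega
    · omega
    · simp only [g, dif_neg hi, dif_neg hj]
      omega
  have hg := Finset.orderEmbOfFin_unique hd hmem hmono
  rw [← congrFun hg]
  cases p with
  | inl i =>
      have hval : ((finCongr h3 (finSumFinEquiv (Sum.inl i)) : Fin d) : ℕ) = (i : ℕ) := by
        simp [finSumFinEquiv]
      simp only [g, hval, dif_pos i.isLt]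
      simp [tn]
  | inr j =>
      have hval : ((finCongr h3 (finSumFinEquiv (Sum.inr j)) : Fin d) : ℕ) = 3 - t + j := by
        simp [finSumFinEquiv]
      have hnl : ¬ (3 - t + (j : ℕ) < 3 - t) := by omega
      simp only [g, hval, dif_neg hnl]
      show 3 - t + (j : ℕ) + t = (j : ℕ) + 3
      omega

lemma minorDet_eq_s4 {R : Type*} [CommRing R] (M : Matrix ℕ ℕ R) (m : ℕ) {t : ℕ} (ht : t ≤ 3)
    (I J : Finset ℕ) (hI : I ⊆ Finset.range 3) (hJ : J ⊆ Finset.range 3)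
    (hIc : I.card = t) (hJc : J.card = t) (a b : Fin (3 - t) → Fin 3)
    (haI : ∀ i, (a i : ℕ) ∉ I) (hbJ : ∀ i, (b i : ℕ) ∉ J)
    (haM : StrictMono a) (hbM : StrictMono b) :
    minorDet M (m + 3) I J = dd (Matrix.of fun p q : Fin 3 ⊕ Fin m => M (tn p) (tn q)) a b := by
  have hIr : I ⊆ Finset.range (m + 3) := hI.trans (Finset.range_subset_range.2 (by omega))
  have hJr : J ⊆ Finset.range (m + 3) := hJ.trans (Finset.range_subset_range.2 (by omega))
  have hdI : (Finset.range (m + 3) \ I).card = m + 3 - t := by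
    rw [Finset.card_sdiff_of_subset hIr, Finset.card_range, hIc]
  have hdJ : (Finset.range (m + 3) \ J).card = m + 3 - t := by
    rw [Finset.card_sdiff_of_subset hJr, Finset.card_range, hJc]
  have hcond : (Finset.range (m + 3) \ J).card = (Finset.range (m + 3) \ I).card := by
    rw [hdI, hdJ]
  have h3 : 3 - t + m = (Finset.range (m + 3) \ I).card := by rw [hdI]; omega
  rw [minorDet, dif_pos hcond, dd,
    ← Matrix.det_submatrix_equiv_self (finSumFinEquiv.trans (finCongr h3))]
  congr 1
  ext p q
  simp only [Matrix.submatrix_apply, Matrix.of_apply, Equiv.trans_apply,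
    Finset.coe_orderIsoOfFin_apply]
  rw [orderEmb_apply ht I hI hIc a haI haM rfl h3 p,
    orderEmb_apply ht J hJ hJc b hbJ hbM hcond h3 q]

/-- The three column expansion identities for `k = 3` (rows/columns `1,2,3` of the paper
are indices `0,1,2` here), for an `n × n` matrix over an integral domain with `n ≥ 3`. -/
theorem column_expansion_k3 {R : Type*} [CommRing R] [IsDomain R] (n : ℕ) (hn : 3 ≤ n)
    (M : Matrix ℕ ℕ R) :
    (minorDet M n ∅ ∅ * minorDet M n {0, 1, 2} {0, 1, 2} =
        minorDet M n {0} {0} * minorDet M n {1, 2} {1, 2} -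
          minorDet M n {1} {0} * minorDet M n {0, 2} {1, 2} +
            minorDet M n {2} {0} * minorDet M n {0, 1} {1, 2}) ∧
      (minorDet M n ∅ ∅ * minorDet M n {0, 1, 2} {0, 1, 2} =
        -(minorDet M n {0} {1} * minorDet M n {1, 2} {0, 2}) +
          minorDet M n {1} {1} * minorDet M n {0, 2} {0, 2} -
            minorDet M n {2} {1} * minorDet M n {0, 1} {0, 2}) ∧
      (minorDet M n ∅ ∅ * minorDet M n {0, 1, 2} {0, 1, 2} =
        minorDet M n {0} {2} * minorDet M n {1, 2} {0, 1} -
          minorDet M n {1} {2} * minorDet M n {0, 2} {0, 1} +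
            minorDet M n {2} {2} * minorDet M n {0, 1} {0, 1}) := by
  obtain ⟨m, rfl⟩ : ∃ m, n = m + 3 := ⟨n - 3, by omega⟩
  obtain ⟨k1, k2, k3⟩ := gident_all (Matrix.of fun p q : Fin 3 ⊕ Fin m => M (tn p) (tn q))
  rw [
    minorDet_eq_s4 M m (t := 0) (by norm_num) (∅ : Finset ℕ) (∅ : Finset ℕ) (by decide) (by decide)
      (by decide) (by decide) ![0,1,2] ![0,1,2] (by decide) (by decide) (by decide) (by decide),
    minorDet_eq_s4 M m (t := 3) (by norm_num) ({0, 1, 2} : Finset ℕ) ({0, 1, 2} : Finset ℕ) (by decide) (by decide)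
      (by decide) (by decide) ![] ![] (by decide) (by decide) (by decide) (by decide),
    minorDet_eq_s4 M m (t := 1) (by norm_num) ({0} : Finset ℕ) ({0} : Finset ℕ) (by decide) (by decide)
      (by decide) (by decide) ![1,2] ![1,2] (by decide) (by decide) (by decide) (by decide),
    minorDet_eq_s4 M m (t := 2) (by norm_num) ({1, 2} : Finset ℕ) ({1, 2} : Finset ℕ) (by decide) (by decide)
      (by decide) (by decide) ![0] ![0] (by decide) (by decide) (by decide) (by decide),
    minorDet_eq_s4 M m (t := 1) (by norm_num) ({1} : Finset ℕ) ({0} : Finset ℕ) (by decide) (by decide)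
      (by decide) (by decide) ![0,2] ![1,2] (by decide) (by decide) (by decide) (by decide),
    minorDet_eq_s4 M m (t := 2) (by norm_num) ({0, 2} : Finset ℕ) ({1, 2} : Finset ℕ) (by decide) (by decide)
      (by decide) (by decide) ![1] ![0] (by decide) (by decide) (by decide) (by decide),
    minorDet_eq_s4 M m (t := 1) (by norm_num) ({2} : Finset ℕ) ({0} : Finset ℕ) (by decide) (by decide)
      (by decide) (by decide) ![0,1] ![1,2] (by decide) (by decide) (by decide) (by decide),
    minorDet_eq_s4 M m (t := 2) (by norm_num) ({0, 1} : Finset ℕ) ({1, 2} : Finset ℕ) (by decide) (by decide)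
      (by decide) (by decide) ![2] ![0] (by decide) (by decide) (by decide) (by decide),
    minorDet_eq_s4 M m (t := 1) (by norm_num) ({0} : Finset ℕ) ({1} : Finset ℕ) (by decide) (by decide)
      (by decide) (by decide) ![1,2] ![0,2] (by decide) (by decide) (by decide) (by decide),
    minorDet_eq_s4 M m (t := 2) (by norm_num) ({1, 2} : Finset ℕ) ({0, 2} : Finset ℕ) (by decide) (by decide)
      (by decide) (by decide) ![0] ![1] (by decide) (by decide) (by decide) (by decide),
    minorDet_eq_s4 M m (t := 1) (by norm_num) ({1} : Finset ℕ) ({1} : Finset ℕ) (by decide) (by decide)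
      (by decide) (by decide) ![0,2] ![0,2] (by decide) (by decide) (by decide) (by decide),
    minorDet_eq_s4 M m (t := 2) (by norm_num) ({0, 2} : Finset ℕ) ({0, 2} : Finset ℕ) (by decide) (by decide)
      (by decide) (by decide) ![1] ![1] (by decide) (by decide) (by decide) (by decide),
    minorDet_eq_s4 M m (t := 1) (by norm_num) ({2} : Finset ℕ) ({1} : Finset ℕ) (by decide) (by decide)
      (by decide) (by decide) ![0,1] ![0,2] (by decide) (by decide) (by decide) (by decide),
    minorDet_eq_s4 M m (t := 2) (by norm_num) ({0, 1} : Finset ℕ) ({0, 2} : Finset ℕ) (by decide) (by decide)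
      (by decide) (by decide) ![2] ![1] (by decide) (by decide) (by decide) (by decide),
    minorDet_eq_s4 M m (t := 1) (by norm_num) ({0} : Finset ℕ) ({2} : Finset ℕ) (by decide) (by decide)
      (by decide) (by decide) ![1,2] ![0,1] (by decide) (by decide) (by decide) (by decide),
    minorDet_eq_s4 M m (t := 2) (by norm_num) ({1, 2} : Finset ℕ) ({0, 1} : Finset ℕ) (by decide) (by decide)
      (by decide) (by decide) ![0] ![2] (by decide) (by decide) (by decide) (by decide),
    minorDet_eq_s4 M m (t := 1) (by norm_num) ({1} : Finset ℕ) ({2} : Finset ℕ) (by decide) (by decide)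
      (by decide) (by decide) ![0,2] ![0,1] (by decide) (by decide) (by decide) (by decide),
    minorDet_eq_s4 M m (t := 2) (by norm_num) ({0, 2} : Finset ℕ) ({0, 1} : Finset ℕ) (by decide) (by decide)
      (by decide) (by decide) ![1] ![2] (by decide) (by decide) (by decide) (by decide),
    minorDet_eq_s4 M m (t := 1) (by norm_num) ({2} : Finset ℕ) ({2} : Finset ℕ) (by decide) (by decide)
      (by decide) (by decide) ![0,1] ![0,1] (by decide) (by decide) (by decide) (by decide),
    minorDet_eq_s4 M m (t := 2) (by norm_num) ({0, 1} : Finset ℕ) ({0, 1} : Finset ℕ) (by decide) (by decide)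
      (by decide) (by decide) ![2] ![2] (by decide) (by decide) (by decide) (by decide)]
  exact ⟨k1, k2, k3⟩
end

section
/- Let L be the weighted Laplacian of the complete graph on n vertices (with symmetric edge variables), and let L_{r,c} denote L with row r and column c removed, where r, c are among the first m marked vertices. For fixed k = m−1 and fixed column index j, the spanning forest identity obtained by substituting L_{r,c} for M in the j-th column expansion identity does not depend on the choice of r: for any r, r' ∈ [k+1], the resulting identities of spanning forest polynomials (written as signed sums of A·B partition-pair monomials after cancellation) coincide. -/
open Finset

/-- The weighted Laplacian of the complete graph on vertices `{0,…,n−1}` with symmetric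
edge weights `a`: `L_{ii} = Σ_{l≠i} a_{il}` and `L_{ij} = −a_{ij}` for `i ≠ j`. -/
noncomputable def lap {R : Type*} [CommRing R] (a : ℕ → ℕ → R) (n : ℕ) :
    Matrix ℕ ℕ R :=
  fun i j => if i = j then ∑ l ∈ Finset.range n \ {i}, a i l else -(a i j)

/-- Skipping map: `skip t` enumerates `{0,1,2,…} ∖ {t}` in increasing order, so that
index `i` of the matrix with row (or column) `t` removed corresponds to original index
`skip t i`. -/
def skip (t i : ℕ) : ℕ := if i < t then i else i + 1

/-- The right-hand side `L_{r,c}(j)` of the spanning forest identity obtained by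
substituting the Laplacian minor `L_{r,c}` (row `r` and column `c` removed, with
`r, c < m = k + 1` marked vertices among `n` vertices) for `M` in the `j`-th column
expansion identity (`0 ≤ j < k = m − 1`):
`(−1)^{r+c} · Σ_{i<k} (−1)^{i+j} det(L_{{skip r i, r},{skip c j, c}})
  · det(L_{[m]∖{skip r i},[m]∖{skip c j}})`
(the factor `(−1)^{r+c}` normalises `det L_{r,c}` to the spanning tree polynomial, so
that the left-hand side of the identity is `Φ_{(1,…,1)} Φ_{(1,2,…,m)}`). -/
noncomputable def lapRHS {R : Type*} [CommRing R] (a : ℕ → ℕ → R) (n m r c j : ℕ) : R :=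
  (-1 : R) ^ (r + c) *
  ∑ i ∈ Finset.range (m - 1), (-1 : R) ^ (i + j) *
    (minorDet (lap a n) n {r, skip r i} {c, skip c j} *
      minorDet (lap a n) n (Finset.range m \ {skip r i}) (Finset.range m \ {skip c j}))

namespace Aux28

variable {R : Type*} [CommRing R]

lemma skip_strictMono (t : ℕ) : StrictMono (skip t) := fun a b h => by
  unfold skip; split <;> split <;> omega

lemma skip_injective (t : ℕ) : Function.Injective (skip t) :=
  (skip_strictMono t).injective

lemma skip_ne (t i : ℕ) : skip t i ≠ t := by unfold skip; split <;> omega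

lemma skip_lt {n t i : ℕ} (h : i < n - 1) : skip t i < n := by unfold skip; split <;> omega

lemma image_skip_range {t m : ℕ} (ht : t < m) :
    (Finset.range (m-1)).image (skip t) = Finset.range m \ {t} := by
  ext z
  simp only [mem_image, mem_range, mem_sdiff, mem_singleton]
  constructor
  · rintro ⟨i, hi, rfl⟩
    exact ⟨skip_lt hi, skip_ne t i⟩
  · rintro ⟨hz, hzt⟩
    by_cases hlt : z < t
    · exact ⟨z, by omega, by unfold skip; split <;> omega⟩
    · exact ⟨z - 1, by omega, by unfold skip; split <;> omega⟩

lemma insert_skip_sdiff {t m i : ℕ} (ht : t < m) (hi : i < m - 1) :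
    insert t ((Finset.range (m-1) \ {i}).image (skip t)) = Finset.range m \ {skip t i} := by
  have h1 : skip t i < m := skip_lt hi
  have h2 : skip t i ≠ t := skip_ne t i
  rw [Finset.image_sdiff _ _ (skip_injective t), image_skip_range ht, Finset.image_singleton]
  ext z
  simp only [mem_insert, mem_sdiff, mem_singleton, mem_range]
  constructor
  · rintro (rfl | ⟨⟨hz, hzt⟩, hzi⟩)
    · exact ⟨ht, Ne.symm h2⟩
    · exact ⟨hz, hzi⟩
  · rintro ⟨hz, hzi⟩
    by_cases hzt : z = t
    · exact Or.inl hzt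
    · exact Or.inr ⟨⟨hz, hzt⟩, hzi⟩

lemma card_sdiff_range {n : ℕ} {I : Finset ℕ} (hI : I ⊆ Finset.range n) :
    (Finset.range n \ I).card = n - I.card := by
  rw [Finset.card_sdiff_of_subset hI, Finset.card_range]

lemma minorDet_eq_det (M : Matrix ℕ ℕ R) (n : ℕ) (I J : Finset ℕ)
    {d : ℕ} {ι : Type} [Fintype ι] [DecidableEq ι] (e : Fin d ≃ ι)
    (gr gc : ι → ℕ) (fr fc : Fin d → ℕ)
    (hfr : ∀ p, fr p = gr (e p)) (hfc : ∀ p, fc p = gc (e p))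
    (hcI : (Finset.range n \ I).card = d) (hcJ : (Finset.range n \ J).card = d)
    (hrm : StrictMono fr) (hcm : StrictMono fc)
    (hrmem : ∀ p, fr p ∈ Finset.range n \ I) (hcmem : ∀ p, fc p ∈ Finset.range n \ J) :
    minorDet M n I J = Matrix.det (Matrix.of fun p q : ι => M (gr p) (gc q)) := by
  have hd : (Finset.range n \ J).card = (Finset.range n \ I).card := hcJ.trans hcI.symm
  rw [minorDet, dif_pos hd]
  have hr1 : (fun p : Fin (Finset.range n \ I).card => fr (finCongr hcI p))
      = (Finset.range n \ I).orderEmbOfFin rfl := by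
    apply Finset.orderEmbOfFin_unique
    · intro x; exact hrmem _
    · intro a b hab
      exact hrm hab
  have hc1 : (fun p : Fin (Finset.range n \ I).card => fc (finCongr hcI p))
      = (Finset.range n \ J).orderEmbOfFin hd := by
    apply Finset.orderEmbOfFin_unique
    · intro x; exact hcmem _
    · intro a b hab
      exact hcm hab
  have key : (Matrix.of fun i j : Fin (Finset.range n \ I).card =>
      M (((Finset.range n \ I).orderIsoOfFin rfl i : ℕ))
        (((Finset.range n \ J).orderIsoOfFin hd j : ℕ)))
      = (Matrix.of fun p q : ι => M (gr p) (gc q)).submatrix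
          ((finCongr hcI).trans e) ((finCongr hcI).trans e) := by
    ext p q
    simp only [Matrix.of_apply, Matrix.submatrix_apply, Equiv.trans_apply]
    rw [Finset.coe_orderIsoOfFin_apply, Finset.coe_orderIsoOfFin_apply,
      ← congrFun hr1 p, ← congrFun hc1 q, hfr, hfc]
  rw [key, Matrix.det_submatrix_equiv_self]


lemma minorDet_singleton_eq (A : Matrix ℕ ℕ R) {n : ℕ} (t c : ℕ) (ht : t < n) (hc : c < n) :
    minorDet A n {t} {c} =
      Matrix.det (Matrix.of fun p q : Fin (n-1) => A (skip t p) (skip c q)) := by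
  refine minorDet_eq_det A n {t} {c} (Equiv.refl (Fin (n-1)))
    (fun p => skip t (p : ℕ)) (fun q => skip c (q : ℕ))
    (fun p => skip t (p : ℕ)) (fun q => skip c (q : ℕ))
    (fun p => rfl) (fun p => rfl) ?_ ?_ ?_ ?_ ?_ ?_
  · rw [card_sdiff_range (by simp [Finset.singleton_subset_iff]; omega)]; simp
  · rw [card_sdiff_range (by simp [Finset.singleton_subset_iff]; omega)]; simp
  · exact fun a b hab => skip_strictMono t hab
  · exact fun a b hab => skip_strictMono c hab
  · intro p
    simp only [Finset.mem_sdiff, Finset.mem_range, Finset.mem_singleton]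
    exact ⟨skip_lt p.isLt, skip_ne t p⟩
  · intro p
    simp only [Finset.mem_sdiff, Finset.mem_range, Finset.mem_singleton]
    exact ⟨skip_lt p.isLt, skip_ne c p⟩

lemma det_skip_succ (A : Matrix ℕ ℕ R) {n : ℕ} (c : ℕ)
    (hsum : ∀ q, q < n → ∑ p ∈ Finset.range n, A p q = 0)
    (t : ℕ) (ht : t + 1 < n) :
    Matrix.det (Matrix.of fun p q : Fin (n-1) => A (skip (t+1) p) (skip c q))
      = - Matrix.det (Matrix.of fun p q : Fin (n-1) => A (skip t p) (skip c q)) := by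
  set B : Matrix (Fin (n-1)) (Fin (n-1)) R :=
    Matrix.of fun p q : Fin (n-1) => A (skip t p) (skip c q) with hB
  have htn : t < n - 1 := by omega
  have hrow : ∀ q : Fin (n-1), A t (skip c q) = ∑ p : Fin (n-1), (-1 : R) * B p q := by
    intro q
    have hq : skip c q < n := skip_lt q.isLt
    have h0 := hsum _ hq
    have hmem : t ∈ Finset.range n := Finset.mem_range.mpr (by omega)
    rw [← Finset.add_sum_erase _ _ hmem, ← Finset.sdiff_singleton_eq_erase] at h0
    have himg : ∑ p ∈ Finset.range n \ {t}, A p (skip c q)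
        = ∑ p : Fin (n-1), B p q := by
      rw [← image_skip_range (show t < n by omega),
        Finset.sum_image (fun a _ b _ h => skip_injective t h), Finset.sum_range]
      rfl
    rw [himg] at h0
    have : A t (skip c q) = - ∑ p : Fin (n-1), B p q := by linear_combination h0
    rw [this, ← Finset.sum_neg_distrib]
    exact Finset.sum_congr rfl fun p _ => by ring
  have hupd : (Matrix.of fun p q : Fin (n-1) => A (skip (t+1) p) (skip c q))
      = B.updateRow ⟨t, htn⟩ (fun q => A t (skip c q)) := by
    ext p q
    by_cases hp : p = ⟨t, htn⟩
    · subst hp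
      rw [Matrix.updateRow_self]
      have hv : ((⟨t, htn⟩ : Fin (n-1)) : ℕ) = t := rfl
      simp only [Matrix.of_apply, hv]
      rw [show skip (t+1) t = t by unfold skip; split <;> omega]
    · rw [Matrix.updateRow_ne hp]
      have hpt : (p : ℕ) ≠ t := fun h => hp (Fin.ext h)
      simp only [Matrix.of_apply, hB]
      rw [show skip (t+1) (p : ℕ) = skip t (p : ℕ) by unfold skip; split <;> split <;> omega]
  have hv : (fun q : Fin (n-1) => A t (skip c q))
      = (∑ k : Fin (n-1), (fun _ : Fin (n-1) => (-1 : R)) k • B k) := by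
    funext q
    rw [Finset.sum_apply]
    simp only [Pi.smul_apply, smul_eq_mul]
    exact hrow q
  rw [hupd, hv, Matrix.det_updateRow_sum]
  simp [hB]

lemma cofactor_indep (A : Matrix ℕ ℕ R) {n : ℕ} (c : ℕ) (hc : c < n)
    (hsum : ∀ q, q < n → ∑ p ∈ Finset.range n, A p q = 0)
    {r r' : ℕ} (hr : r < n) (hr' : r' < n) :
    (-1 : R) ^ r * minorDet A n {r} {c} = (-1 : R) ^ r' * minorDet A n {r'} {c} := by
  suffices h : ∀ t, t < n → (-1:R)^t * minorDet A n {t} {c} = minorDet A n {0} {c} by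
    rw [h r hr, h r' hr']
  intro t
  induction t with
  | zero => intro _; simp
  | succ t ih =>
    intro htn
    rw [minorDet_singleton_eq A (t+1) c htn hc, det_skip_succ A c hsum t htn,
      ← minorDet_singleton_eq A t c (by omega) hc]
    rw [show ((-1:R)^(t+1) * -(minorDet A n {t} {c})) = (-1:R)^t * minorDet A n {t} {c} by ring]
    exact ih (by omega)


noncomputable def sylLHS (k l : ℕ) {S : Type*} [CommRing S]
    (M : Matrix (Fin (k+1) ⊕ Fin l) (Fin (k+1) ⊕ Fin l) S) : S :=
  M.det * (M.submatrix Sum.inr Sum.inr).det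

noncomputable def sylRHS (k l : ℕ) {S : Type*} [CommRing S] (j : Fin (k+1))
    (M : Matrix (Fin (k+1) ⊕ Fin l) (Fin (k+1) ⊕ Fin l) S) : S :=
  ∑ i : Fin (k+1), (-1:S) ^ ((i:ℕ) + (j:ℕ)) *
    ((M.submatrix (Sum.map i.succAbove id) (Sum.map j.succAbove id)).det *
     (M.submatrix (Sum.elim (fun _ : Fin 1 => Sum.inl i) Sum.inr)
                  (Sum.elim (fun _ : Fin 1 => Sum.inl j) Sum.inr)).det)

lemma syl_blocks {F : Type*} [Field F] (k l : ℕ) (j : Fin (k+1))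
    (P : Matrix (Fin (k+1)) (Fin (k+1)) F) (Q : Matrix (Fin (k+1)) (Fin l) F)
    (S : Matrix (Fin l) (Fin (k+1)) F) (T : Matrix (Fin l) (Fin l) F)
    (hT : T.det ≠ 0) :
    sylLHS k l (Matrix.fromBlocks P Q S T) = sylRHS k l j (Matrix.fromBlocks P Q S T) := by
  haveI : Invertible T := T.invertibleOfIsUnitDet (isUnit_iff_ne_zero.mpr hT)
  have hTsub : (Matrix.fromBlocks P Q S T).submatrix Sum.inr Sum.inr = T := by
    ext p q; rfl
  have hdetM : (Matrix.fromBlocks P Q S T).det = T.det * (P - Q * ⅟T * S).det :=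
    Matrix.det_fromBlocks₂₂ P Q S T
  have hsub : ∀ i : Fin (k+1),
      ((Matrix.fromBlocks P Q S T).submatrix (Sum.map i.succAbove id)
        (Sum.map j.succAbove id)).det
        = T.det * ((P - Q * ⅟T * S).submatrix i.succAbove j.succAbove).det := by
    intro i
    have h1 : (Matrix.fromBlocks P Q S T).submatrix (Sum.map i.succAbove id)
          (Sum.map j.succAbove id)
        = Matrix.fromBlocks (P.submatrix i.succAbove j.succAbove) (Q.submatrix i.succAbove id)
            (S.submatrix id j.succAbove) T := by
      ext p q; cases p <;> cases q <;> rfl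
    rw [h1, Matrix.det_fromBlocks₂₂]
    have h2 : P.submatrix i.succAbove j.succAbove - Q.submatrix i.succAbove id * ⅟T
          * S.submatrix id j.succAbove
        = (P - Q * ⅟T * S).submatrix i.succAbove j.succAbove := by
      ext p q
      simp only [Matrix.sub_apply, Matrix.mul_apply, Matrix.submatrix_apply, id_eq]
    rw [h2]
  have hone : ∀ i : Fin (k+1),
      ((Matrix.fromBlocks P Q S T).submatrix (Sum.elim (fun _ : Fin 1 => Sum.inl i) Sum.inr)
          (Sum.elim (fun _ : Fin 1 => Sum.inl j) Sum.inr)).det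
        = T.det * (P - Q * ⅟T * S) i j := by
    intro i
    have h1 : (Matrix.fromBlocks P Q S T).submatrix (Sum.elim (fun _ : Fin 1 => Sum.inl i) Sum.inr)
          (Sum.elim (fun _ : Fin 1 => Sum.inl j) Sum.inr)
        = Matrix.fromBlocks (Matrix.of fun _ _ : Fin 1 => P i j)
            (Matrix.of fun (_ : Fin 1) q => Q i q) (Matrix.of fun p (_ : Fin 1) => S p j) T := by
      ext p q; cases p <;> cases q <;> rfl
    rw [h1, Matrix.det_fromBlocks₂₂]
    congr 1
    rw [Matrix.det_fin_one]
    simp only [Matrix.sub_apply, Matrix.mul_apply, Matrix.of_apply]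
  unfold sylLHS sylRHS
  rw [hTsub, hdetM]
  calc T.det * (P - Q * ⅟T * S).det * T.det
      = T.det * T.det * ∑ i : Fin (k+1), (-1:F) ^ ((i:ℕ) + (j:ℕ)) * (P - Q * ⅟T * S) i j
          * ((P - Q * ⅟T * S).submatrix i.succAbove j.succAbove).det := by
        rw [← Matrix.det_succ_column (P - Q * ⅟T * S) j]; ring
    _ = _ := by
        rw [Finset.mul_sum]
        refine Finset.sum_congr rfl fun i _ => ?_
        rw [hsub i, hone i]; ring

lemma syl_field {F : Type*} [Field F] (k l : ℕ) (j : Fin (k+1))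
    (M : Matrix (Fin (k+1) ⊕ Fin l) (Fin (k+1) ⊕ Fin l) F)
    (hT : (M.submatrix Sum.inr Sum.inr).det ≠ 0) :
    sylLHS k l M = sylRHS k l j M := by
  have hM : M = Matrix.fromBlocks (M.submatrix Sum.inl Sum.inl) (M.submatrix Sum.inl Sum.inr)
      (M.submatrix Sum.inr Sum.inl) (M.submatrix Sum.inr Sum.inr) := by
    ext p q; cases p <;> cases q <;> rfl
  rw [hM]
  exact syl_blocks k l j _ _ _ _ hT

lemma sylLHS_map {S S' : Type*} [CommRing S] [CommRing S'] (f : S →+* S') (k l : ℕ)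
    (M : Matrix (Fin (k+1) ⊕ Fin l) (Fin (k+1) ⊕ Fin l) S) :
    sylLHS k l (M.map f) = f (sylLHS k l M) := by
  simp only [sylLHS, map_mul, RingHom.map_det, RingHom.mapMatrix_apply, Matrix.submatrix_map]

lemma sylRHS_map {S S' : Type*} [CommRing S] [CommRing S'] (f : S →+* S') (k l : ℕ)
    (j : Fin (k+1)) (M : Matrix (Fin (k+1) ⊕ Fin l) (Fin (k+1) ⊕ Fin l) S) :
    sylRHS k l j (M.map f) = f (sylRHS k l j M) := by
  simp only [sylRHS, map_sum, map_mul, map_pow, map_neg, map_one, RingHom.map_det,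
    RingHom.mapMatrix_apply, Matrix.submatrix_map]

lemma syl_comm (k l : ℕ) (j : Fin (k+1))
    (M : Matrix (Fin (k+1) ⊕ Fin l) (Fin (k+1) ⊕ Fin l) R) :
    sylLHS k l M = sylRHS k l j M := by
  classical
  have hgen : sylLHS k l (Matrix.of fun p q : Fin (k+1) ⊕ Fin l =>
        MvPolynomial.X (R := ℤ) (p, q))
      = sylRHS k l j (Matrix.of fun p q : Fin (k+1) ⊕ Fin l => MvPolynomial.X (R := ℤ) (p, q)) := by
    set Sp := MvPolynomial ((Fin (k+1) ⊕ Fin l) × (Fin (k+1) ⊕ Fin l)) ℤ with hSp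
    set X : Matrix (Fin (k+1) ⊕ Fin l) (Fin (k+1) ⊕ Fin l) Sp :=
      Matrix.of fun p q => MvPolynomial.X (p, q) with hX
    set F := FractionRing Sp with hF
    have hinj : Function.Injective (algebraMap Sp F) := IsFractionRing.injective Sp F
    have hdet0 : (X.submatrix Sum.inr Sum.inr).det ≠ 0 := by
      intro h0
      have h1 : ((X.submatrix Sum.inr Sum.inr).map (MvPolynomial.eval₂Hom (Int.castRingHom ℤ)
          (fun p : (Fin (k+1) ⊕ Fin l) × (Fin (k+1) ⊕ Fin l) =>
            if p.1 = p.2 then (1:ℤ) else 0))) = (1 : Matrix (Fin l) (Fin l) ℤ) := by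
        ext p q
        simp only [Matrix.map_apply, Matrix.submatrix_apply, hX, Matrix.of_apply,
          MvPolynomial.eval₂Hom_X', Matrix.one_apply, Sum.inr.injEq]
      have h2 := congrArg (MvPolynomial.eval₂Hom (Int.castRingHom ℤ)
          (fun p : (Fin (k+1) ⊕ Fin l) × (Fin (k+1) ⊕ Fin l) =>
            if p.1 = p.2 then (1:ℤ) else 0)) h0
      rw [RingHom.map_det, map_zero, RingHom.mapMatrix_apply, h1, Matrix.det_one] at h2
      exact one_ne_zero h2
    have hT : ((X.map (algebraMap Sp F)).submatrix Sum.inr Sum.inr).det ≠ 0 := by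
      have he : (X.map (algebraMap Sp F)).submatrix Sum.inr Sum.inr
          = (X.submatrix Sum.inr Sum.inr).map (algebraMap Sp F) := by
        ext p q; rfl
      rw [he, ← RingHom.mapMatrix_apply, ← RingHom.map_det]
      intro h0
      exact hdet0 (hinj (by rw [h0, map_zero]))
    have hF2 := syl_field k l j (X.map (algebraMap Sp F)) hT
    rw [sylLHS_map, sylRHS_map] at hF2
    exact hinj hF2
  set f : MvPolynomial ((Fin (k+1) ⊕ Fin l) × (Fin (k+1) ⊕ Fin l)) ℤ →+* R :=
    MvPolynomial.eval₂Hom (Int.castRingHom R)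
      (fun p : (Fin (k+1) ⊕ Fin l) × (Fin (k+1) ⊕ Fin l) => M p.1 p.2) with hf
  have hXf : (Matrix.of fun p q : Fin (k+1) ⊕ Fin l =>
      MvPolynomial.X (R := ℤ) (p, q)).map f = M := by
    ext p q
    simp [hf, Matrix.map_apply, MvPolynomial.eval₂Hom_X']
  calc sylLHS k l M = sylLHS k l ((Matrix.of fun p q : Fin (k+1) ⊕ Fin l =>
        MvPolynomial.X (R := ℤ) (p, q)).map f) := by rw [hXf]
    _ = f (sylLHS k l (Matrix.of fun p q : Fin (k+1) ⊕ Fin l =>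
        MvPolynomial.X (R := ℤ) (p, q))) := sylLHS_map f k l _
    _ = f (sylRHS k l j (Matrix.of fun p q : Fin (k+1) ⊕ Fin l =>
        MvPolynomial.X (R := ℤ) (p, q))) := by rw [hgen]
    _ = sylRHS k l j ((Matrix.of fun p q : Fin (k+1) ⊕ Fin l =>
        MvPolynomial.X (R := ℤ) (p, q)).map f) := (sylRHS_map f k l j _).symm
    _ = sylRHS k l j M := by rw [hXf]


lemma val_succAbove {k : ℕ} (i : Fin (k+1)) (a : Fin k) :
    ((i.succAbove a) : ℕ) = skip (i : ℕ) (a : ℕ) := by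
  rcases Nat.lt_or_ge (a : ℕ) (i : ℕ) with h | h
  · rw [Fin.succAbove_of_castSucc_lt _ _ (by rwa [Fin.lt_def])]
    unfold skip
    simp [h]
  · rw [Fin.succAbove_of_le_castSucc _ _ (by rwa [Fin.le_def])]
    unfold skip
    rw [if_neg (by omega)]
    simp

lemma sylvester_nat (M : Matrix ℕ ℕ R) (N k j : ℕ) (hk : k ≤ N) (hj : j < k) :
    minorDet M N ∅ ∅ * minorDet M N (Finset.range k) (Finset.range k)
      = ∑ i ∈ Finset.range k, (-1:R)^(i+j) *
          (minorDet M N {i} {j} * minorDet M N (Finset.range k \ {i}) (Finset.range k \ {j})) := by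
  obtain ⟨k', rfl⟩ : ∃ k', k = k' + 1 := ⟨k - 1, by omega⟩
  obtain ⟨l, hN⟩ : ∃ l, N = (k' + 1) + l := ⟨N - (k'+1), by omega⟩
  set emb : Fin (k'+1) ⊕ Fin l → ℕ :=
    Sum.elim (fun a => (a:ℕ)) (fun b => (k'+1) + (b:ℕ)) with hemb
  have hembval : ∀ x : Fin ((k'+1) + l), emb (finSumFinEquiv.symm x) = (x : ℕ) := by
    intro x
    obtain ⟨s, rfl⟩ := finSumFinEquiv.surjective x
    rw [Equiv.symm_apply_apply]
    cases s with
    | inl a => simp [hemb, finSumFinEquiv_apply_left]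
    | inr b => simp [hemb, finSumFinEquiv_apply_right]
  have hval3 : ∀ (t : Fin (k'+1)) (x : Fin (k' + l)),
      emb (Sum.map t.succAbove id (finSumFinEquiv.symm x)) = skip (t:ℕ) (x:ℕ) := by
    intro t x
    obtain ⟨s, rfl⟩ := finSumFinEquiv.surjective x
    rw [Equiv.symm_apply_apply]
    cases s with
    | inl a =>
      simp [hemb, finSumFinEquiv_apply_left, val_succAbove]
    | inr b =>
      have htk : (t:ℕ) < k'+1 := t.isLt
      simp only [Sum.map_inr, id_eq, hemb, Sum.elim_inr, finSumFinEquiv_apply_right,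
        Fin.coe_natAdd]
      unfold skip
      rw [if_neg (by omega)]
      omega
  have hval4 : ∀ (t : Fin (k'+1)) (x : Fin (1 + l)),
      emb (Sum.elim (fun _ : Fin 1 => Sum.inl t) Sum.inr (finSumFinEquiv.symm x))
        = if (x:ℕ) = 0 then (t:ℕ) else (k'+1) + ((x:ℕ) - 1) := by
    intro t x
    obtain ⟨s, rfl⟩ := finSumFinEquiv.surjective x
    rw [Equiv.symm_apply_apply]
    cases s with
    | inl a =>
      have ha : (a:ℕ) = 0 := by omega
      simp [hemb, finSumFinEquiv_apply_left, ha]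
    | inr b =>
      simp only [Sum.elim_inr, hemb, finSumFinEquiv_apply_right, Fin.coe_natAdd]
      show k' + 1 + (b:ℕ) = if 1 + (b:ℕ) = 0 then (t:ℕ) else k' + 1 + (1 + (b:ℕ) - 1)
      rw [if_neg (by omega)]
      omega
  have h00 : (Matrix.of fun p q => M (emb p) (emb q)).det = minorDet M N ∅ ∅ := by
    refine (minorDet_eq_det M N ∅ ∅ ((finCongr hN).trans finSumFinEquiv.symm)
      emb emb (fun p : Fin N => (p:ℕ)) (fun p : Fin N => (p:ℕ)) ?_ ?_ ?_ ?_ ?_ ?_ ?_ ?_).symm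
    · intro p; rw [Equiv.trans_apply, hembval]; rfl
    · intro p; rw [Equiv.trans_apply, hembval]; rfl
    · simp
    · simp
    · exact fun a b hab => hab
    · exact fun a b hab => hab
    · intro p; simp [p.isLt]
    · intro p; simp [p.isLt]
  have hkk : ((Matrix.of fun p q => M (emb p) (emb q)).submatrix Sum.inr Sum.inr).det
      = minorDet M N (Finset.range (k'+1)) (Finset.range (k'+1)) := by
    have hsub : Finset.range (k'+1) ⊆ Finset.range N := by
      intro x hx; simp only [Finset.mem_range] at *; omega
    have hcard : (Finset.range N \ Finset.range (k'+1)).card = l := by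
      rw [card_sdiff_range hsub, Finset.card_range]; omega
    refine (minorDet_eq_det M N (Finset.range (k'+1)) (Finset.range (k'+1))
      (Equiv.refl (Fin l)) (fun b => emb (Sum.inr b)) (fun b => emb (Sum.inr b))
      (fun b : Fin l => (k'+1) + (b:ℕ)) (fun b : Fin l => (k'+1) + (b:ℕ))
      ?_ ?_ hcard hcard ?_ ?_ ?_ ?_).symm
    · intro p; rfl
    · intro p; rfl
    · intro a b hab; simp only []; omega
    · intro a b hab; simp only []; omega
    · intro p
      simp only [Finset.mem_sdiff, Finset.mem_range]
      have := p.isLt; omega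
    · intro p
      simp only [Finset.mem_sdiff, Finset.mem_range]
      have := p.isLt; omega
  have h3 : ∀ i : Fin (k'+1),
      (((Matrix.of fun p q => M (emb p) (emb q))).submatrix
        (Sum.map i.succAbove id) (Sum.map (⟨j, hj⟩ : Fin (k'+1)).succAbove id)).det
      = minorDet M N {(i:ℕ)} {j} := by
    intro i
    have h1 : N - 1 = k' + l := by omega
    have hiN : (i:ℕ) < N := by have := i.isLt; omega
    have hcardI : (Finset.range N \ {(i:ℕ)}).card = N - 1 := by
      rw [card_sdiff_range (by simp only [Finset.singleton_subset_iff, Finset.mem_range]; omega)]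
      simp
    have hcardJ : (Finset.range N \ {j}).card = N - 1 := by
      rw [card_sdiff_range (by simp only [Finset.singleton_subset_iff, Finset.mem_range]; omega)]
      simp
    refine (minorDet_eq_det M N {(i:ℕ)} {j} ((finCongr h1).trans finSumFinEquiv.symm)
      (fun p => emb (Sum.map i.succAbove id p))
      (fun p => emb (Sum.map (⟨j, hj⟩ : Fin (k'+1)).succAbove id p))
      (fun p : Fin (N-1) => skip (i:ℕ) (p:ℕ)) (fun p : Fin (N-1) => skip j (p:ℕ))
      ?_ ?_ hcardI hcardJ ?_ ?_ ?_ ?_).symm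
    · intro p; exact (hval3 i ((finCongr h1) p)).symm
    · intro p; exact (hval3 ⟨j, hj⟩ ((finCongr h1) p)).symm
    · exact fun a b hab => skip_strictMono _ hab
    · exact fun a b hab => skip_strictMono _ hab
    · intro p
      simp only [Finset.mem_sdiff, Finset.mem_range, Finset.mem_singleton]
      exact ⟨skip_lt p.isLt, skip_ne _ _⟩
    · intro p
      simp only [Finset.mem_sdiff, Finset.mem_range, Finset.mem_singleton]
      exact ⟨skip_lt p.isLt, skip_ne _ _⟩
  have h4 : ∀ i : Fin (k'+1),
      (((Matrix.of fun p q => M (emb p) (emb q))).submatrix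
        (Sum.elim (fun _ : Fin 1 => Sum.inl i) Sum.inr)
        (Sum.elim (fun _ : Fin 1 => Sum.inl (⟨j, hj⟩ : Fin (k'+1))) Sum.inr)).det
      = minorDet M N (Finset.range (k'+1) \ {(i:ℕ)}) (Finset.range (k'+1) \ {j}) := by
    intro i
    have h2 : l + 1 = 1 + l := by omega
    have hik : (i:ℕ) < k'+1 := i.isLt
    have hcardI : (Finset.range N \ (Finset.range (k'+1) \ {(i:ℕ)})).card = l + 1 := by
      rw [card_sdiff_range (Finset.sdiff_subset.trans (by
        intro x hx; simp only [Finset.mem_range] at *; omega))]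
      rw [Finset.card_sdiff_of_subset (by simp only [Finset.singleton_subset_iff, Finset.mem_range]; omega)]
      simp only [Finset.card_range, Finset.card_singleton]
      omega
    have hcardJ : (Finset.range N \ (Finset.range (k'+1) \ {j})).card = l + 1 := by
      rw [card_sdiff_range (Finset.sdiff_subset.trans (by
        intro x hx; simp only [Finset.mem_range] at *; omega))]
      rw [Finset.card_sdiff_of_subset (by simp only [Finset.singleton_subset_iff, Finset.mem_range]; omega)]
      simp only [Finset.card_range, Finset.card_singleton]
      omega
    refine (minorDet_eq_det M N (Finset.range (k'+1) \ {(i:ℕ)}) (Finset.range (k'+1) \ {j})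
      ((finCongr h2).trans finSumFinEquiv.symm)
      (fun p => emb (Sum.elim (fun _ : Fin 1 => Sum.inl i) Sum.inr p))
      (fun p => emb (Sum.elim (fun _ : Fin 1 => Sum.inl (⟨j, hj⟩ : Fin (k'+1))) Sum.inr p))
      (fun p : Fin (l+1) => if (p:ℕ) = 0 then (i:ℕ) else (k'+1) + ((p:ℕ) - 1))
      (fun p : Fin (l+1) => if (p:ℕ) = 0 then j else (k'+1) + ((p:ℕ) - 1))
      ?_ ?_ hcardI hcardJ ?_ ?_ ?_ ?_).symm
    · intro p; exact (hval4 i ((finCongr h2) p)).symm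
    · intro p; exact (hval4 ⟨j, hj⟩ ((finCongr h2) p)).symm
    · intro a b hab
      have hb := b.isLt
      dsimp only
      split_ifs <;> omega
    · intro a b hab
      have hb := b.isLt
      dsimp only
      split_ifs <;> omega
    · intro p
      have hp := p.isLt
      simp only [Finset.mem_sdiff, Finset.mem_range, Finset.mem_singleton, not_and, not_not]
      split_ifs with h
      · exact ⟨by omega, fun _ => rfl⟩
      · exact ⟨by omega, fun hlt => absurd hlt (by omega)⟩
    · intro p
      have hp := p.isLt
      simp only [Finset.mem_sdiff, Finset.mem_range, Finset.mem_singleton, not_and, not_not]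
      split_ifs with h
      · exact ⟨by omega, fun _ => rfl⟩
      · exact ⟨by omega, fun hlt => absurd hlt (by omega)⟩
  calc minorDet M N ∅ ∅ * minorDet M N (Finset.range (k'+1)) (Finset.range (k'+1))
      = sylLHS k' l (Matrix.of fun p q => M (emb p) (emb q)) := by
        unfold sylLHS; rw [h00, hkk]
    _ = sylRHS k' l ⟨j, hj⟩ (Matrix.of fun p q => M (emb p) (emb q)) :=
        syl_comm k' l ⟨j, hj⟩ _
    _ = ∑ i : Fin (k'+1), (-1:R)^((i:ℕ)+j) *
          (minorDet M N {(i:ℕ)} {j} *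
            minorDet M N (Finset.range (k'+1) \ {(i:ℕ)}) (Finset.range (k'+1) \ {j})) := by
        unfold sylRHS
        refine Finset.sum_congr rfl fun i _ => ?_
        rw [h3 i, h4 i]
    _ = _ := (Finset.sum_range (fun i => (-1:R)^(i+j) *
          (minorDet M N {i} {j} *
            minorDet M N (Finset.range (k'+1) \ {i}) (Finset.range (k'+1) \ {j})))).symm


lemma minorDet_skip (L : Matrix ℕ ℕ R) {n : ℕ} (r c : ℕ) (hr : r < n) (hc : c < n)
    {I J : Finset ℕ} (hI : I ⊆ Finset.range (n-1)) (hJ : J ⊆ Finset.range (n-1))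
    (hcard : J.card = I.card) :
    minorDet (Matrix.of fun p q => L (skip r p) (skip c q)) (n-1) I J
      = minorDet L n (insert r (I.image (skip r))) (insert c (J.image (skip c))) := by
  classical
  have hIc : I.card ≤ n - 1 := by simpa using Finset.card_le_card hI
  have hcardI : (Finset.range (n-1) \ I).card = (Finset.range (n-1) \ I).card := rfl
  have hdval : (Finset.range (n-1) \ I).card = n - 1 - I.card := card_sdiff_range hI
  have hcardJ : (Finset.range (n-1) \ J).card = (Finset.range (n-1) \ I).card := by
    rw [card_sdiff_range hJ, hcard, hdval]
  have hinsI : insert r (I.image (skip r)) ⊆ Finset.range n := by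
    intro x hx
    rcases Finset.mem_insert.mp hx with rfl | hx
    · exact Finset.mem_range.mpr hr
    · obtain ⟨i, hi, rfl⟩ := Finset.mem_image.mp hx
      exact Finset.mem_range.mpr (skip_lt (Finset.mem_range.mp (hI hi)))
  have hinsJ : insert c (J.image (skip c)) ⊆ Finset.range n := by
    intro x hx
    rcases Finset.mem_insert.mp hx with rfl | hx
    · exact Finset.mem_range.mpr hc
    · obtain ⟨i, hi, rfl⟩ := Finset.mem_image.mp hx
      exact Finset.mem_range.mpr (skip_lt (Finset.mem_range.mp (hJ hi)))
  have hnotI : r ∉ I.image (skip r) := by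
    intro hmem
    obtain ⟨i, _, hieq⟩ := Finset.mem_image.mp hmem
    exact skip_ne r i hieq
  have hnotJ : c ∉ J.image (skip c) := by
    intro hmem
    obtain ⟨i, _, hieq⟩ := Finset.mem_image.mp hmem
    exact skip_ne c i hieq
  have hcardI' : (Finset.range n \ insert r (I.image (skip r))).card
      = (Finset.range (n-1) \ I).card := by
    rw [card_sdiff_range hinsI, Finset.card_insert_of_notMem hnotI,
      Finset.card_image_of_injective _ (skip_injective r), hdval]
    omega
  have hcardJ' : (Finset.range n \ insert c (J.image (skip c))).card
      = (Finset.range (n-1) \ I).card := by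
    rw [card_sdiff_range hinsJ, Finset.card_insert_of_notMem hnotJ,
      Finset.card_image_of_injective _ (skip_injective c), hcard, hdval]
    omega
  rw [minorDet_eq_det L n (insert r (I.image (skip r))) (insert c (J.image (skip c)))
    (Equiv.refl (Fin ((Finset.range (n-1) \ I).card)))
    (fun p => skip r ((Finset.range (n-1) \ I).orderEmbOfFin hcardI p))
    (fun q => skip c ((Finset.range (n-1) \ J).orderEmbOfFin hcardJ q))
    (fun p => skip r ((Finset.range (n-1) \ I).orderEmbOfFin hcardI p))
    (fun q => skip c ((Finset.range (n-1) \ J).orderEmbOfFin hcardJ q))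
    (fun p => rfl) (fun q => rfl) hcardI' hcardJ'
    (fun a b hab => skip_strictMono r
      (((Finset.range (n-1) \ I).orderEmbOfFin hcardI).strictMono hab))
    (fun a b hab => skip_strictMono c
      (((Finset.range (n-1) \ J).orderEmbOfFin hcardJ).strictMono hab))
    (fun p => by
      have hm := Finset.orderEmbOfFin_mem (Finset.range (n-1) \ I) hcardI p
      rw [Finset.mem_sdiff, Finset.mem_range] at hm
      refine Finset.mem_sdiff.mpr ⟨Finset.mem_range.mpr (skip_lt hm.1), fun hmem => ?_⟩
      rcases Finset.mem_insert.mp hmem with heq | hmem2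
      · exact skip_ne r _ heq
      · obtain ⟨i, hi, hieq⟩ := Finset.mem_image.mp hmem2
        exact hm.2 ((skip_injective r hieq) ▸ hi))
    (fun q => by
      have hm := Finset.orderEmbOfFin_mem (Finset.range (n-1) \ J) hcardJ q
      rw [Finset.mem_sdiff, Finset.mem_range] at hm
      refine Finset.mem_sdiff.mpr ⟨Finset.mem_range.mpr (skip_lt hm.1), fun hmem => ?_⟩
      rcases Finset.mem_insert.mp hmem with heq | hmem2
      · exact skip_ne c _ heq
      · obtain ⟨i, hi, hieq⟩ := Finset.mem_image.mp hmem2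
        exact hm.2 ((skip_injective c hieq) ▸ hi))]
  rw [minorDet, dif_pos hcardJ]
  refine congrArg Matrix.det ?_
  ext p q
  rfl


lemma lap_colsum (a : ℕ → ℕ → R) (n : ℕ) (hsym : ∀ i j, a i j = a j i)
    (q : ℕ) (hq : q < n) : ∑ p ∈ Finset.range n, lap a n p q = 0 := by
  have hmem : q ∈ Finset.range n := Finset.mem_range.mpr hq
  rw [← Finset.add_sum_erase _ _ hmem, ← Finset.sdiff_singleton_eq_erase]
  have h3 : lap a n q q = ∑ p ∈ Finset.range n \ {q}, a q p := by
    simp [lap]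
  have h2 : ∑ p ∈ Finset.range n \ {q}, lap a n p q
      = - ∑ p ∈ Finset.range n \ {q}, a q p := by
    rw [← Finset.sum_neg_distrib]
    refine Finset.sum_congr rfl fun p hp => ?_
    have hpq : p ≠ q := by
      rw [Finset.mem_sdiff, Finset.mem_singleton] at hp; exact hp.2
    simp [lap, hpq, hsym p q]
  rw [h3, h2]
  ring

end Aux28

open Aux28

/-- **Lemma 2.8 ("the row removed does not matter").**  For the Laplacian of the
complete graph on `n` vertices with symmetric edge weights, with `m ≤ n` marked
vertices, the spanning forest identity obtained by substituting `L_{r,c}` into the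
`j`-th column expansion identity is independent of the removed row `r`: its right-hand
side coincides with the one for `L_{r',c}`, for any `r, r' < m`. -/
theorem row_removed_irrelevant {R : Type*} [CommRing R] (n m : ℕ) (hm : m ≤ n)
    (h2 : 2 ≤ m) (a : ℕ → ℕ → R) (hsym : ∀ i j, a i j = a j i)
    (r r' c j : ℕ) (hr : r < m) (hr' : r' < m) (hc : c < m) (hj : j < m - 1) :
    lapRHS a n m r c j = lapRHS a n m r' c j := by
  have hrn : r < n := lt_of_lt_of_le hr hm
  have hrn' : r' < n := lt_of_lt_of_le hr' hm
  have hcn : c < n := lt_of_lt_of_le hc hm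
  have key : ∀ t, t < m → lapRHS a n m t c j
      = ((-1:R)^t * minorDet (lap a n) n {t} {c}) *
        ((-1:R)^c * minorDet (lap a n) n (Finset.range m) (Finset.range m)) := by
    intro t htm
    have htn : t < n := lt_of_lt_of_le htm hm
    unfold lapRHS
    have hstep : ∑ i ∈ Finset.range (m-1), (-1:R)^(i+j) *
        (minorDet (lap a n) n {t, skip t i} {c, skip c j} *
          minorDet (lap a n) n (Finset.range m \ {skip t i}) (Finset.range m \ {skip c j}))
        = ∑ i ∈ Finset.range (m-1), (-1:R)^(i+j) *
        (minorDet (Matrix.of fun p q => lap a n (skip t p) (skip c q)) (n-1) {i} {j} *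
          minorDet (Matrix.of fun p q => lap a n (skip t p) (skip c q)) (n-1)
            (Finset.range (m-1) \ {i}) (Finset.range (m-1) \ {j})) := by
      refine Finset.sum_congr rfl fun i hi => ?_
      have him : i < m - 1 := Finset.mem_range.mp hi
      have e1 : minorDet (Matrix.of fun p q => lap a n (skip t p) (skip c q)) (n-1) {i} {j}
          = minorDet (lap a n) n {t, skip t i} {c, skip c j} := by
        rw [minorDet_skip (lap a n) t c htn hcn
          (by simp only [Finset.singleton_subset_iff, Finset.mem_range]; omega)
          (by simp only [Finset.singleton_subset_iff, Finset.mem_range]; omega) (by simp)]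
        rw [Finset.image_singleton, Finset.image_singleton]
      have e2 : minorDet (Matrix.of fun p q => lap a n (skip t p) (skip c q)) (n-1)
            (Finset.range (m-1) \ {i}) (Finset.range (m-1) \ {j})
          = minorDet (lap a n) n (Finset.range m \ {skip t i})
              (Finset.range m \ {skip c j}) := by
        rw [minorDet_skip (lap a n) t c htn hcn
          (Finset.sdiff_subset.trans
            (by intro x hx; simp only [Finset.mem_range] at *; omega))
          (Finset.sdiff_subset.trans
            (by intro x hx; simp only [Finset.mem_range] at *; omega))
          (by rw [Finset.card_sdiff_of_subset (by simpa using hj),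
                Finset.card_sdiff_of_subset (by simpa using him)]; simp)]
        rw [insert_skip_sdiff htm him, insert_skip_sdiff hc hj]
      rw [e1, e2]
    rw [hstep, ← sylvester_nat (Matrix.of fun p q => lap a n (skip t p) (skip c q))
      (n-1) (m-1) j (by omega) hj]
    have e3 : minorDet (Matrix.of fun p q => lap a n (skip t p) (skip c q)) (n-1) ∅ ∅
        = minorDet (lap a n) n {t} {c} := by
      rw [minorDet_skip (lap a n) t c htn hcn (by simp) (by simp) (by simp)]
      simp
    have e4 : minorDet (Matrix.of fun p q => lap a n (skip t p) (skip c q)) (n-1)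
          (Finset.range (m-1)) (Finset.range (m-1))
        = minorDet (lap a n) n (Finset.range m) (Finset.range m) := by
      rw [minorDet_skip (lap a n) t c htn hcn
        (by intro x hx; simp only [Finset.mem_range] at *; omega)
        (by intro x hx; simp only [Finset.mem_range] at *; omega) rfl]
      rw [image_skip_range htm, image_skip_range hc,
        Finset.sdiff_singleton_eq_erase, Finset.sdiff_singleton_eq_erase,
        Finset.insert_erase (Finset.mem_range.mpr htm),
        Finset.insert_erase (Finset.mem_range.mpr hc)]
    rw [e3, e4, pow_add]
    ring
  rw [key r hr, key r' hr']
  have hcof := cofactor_indep (lap a n) c hcn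
    (fun q hq => lap_colsum a n hsym q hq) hrn hrn'
  rw [hcof]
end

section
/- For m = 4 marked vertices on any graph G, the three right-hand sides arising from the same block sum to the same expression; in particular L_{4,4}(1) + L_{4,4}(2) + L_{4,4}(3) = L_{4,3}(1) + L_{4,3}(2) + L_{4,3}(3) as sums of AB monomials, and each equals the sum of all 24 non-forbidden products A_iB_j (those with i,j such that the two vertices paired in A_i lie in different parts of B_j), each with coefficient 1. -/
open Finset

/-- The six 3-part set partitions of the four marked vertices, in the paper's indexing:
`A₁=(1,1,2,3)`, `A₂=(1,2,1,3)`, `A₃=(1,2,2,3)`, `A₄=(1,2,3,1)`, `A₅=(1,2,3,2)`,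
`A₆=(1,2,3,3)`. -/
def Apart4 : Fin 6 → Fin 4 → Option ℕ :=
  ![![some 1, some 1, some 2, some 3],
    ![some 1, some 2, some 1, some 3],
    ![some 1, some 2, some 2, some 3],
    ![some 1, some 2, some 3, some 1],
    ![some 1, some 2, some 3, some 2],
    ![some 1, some 2, some 3, some 3]]

/-- The seven 2-part set partitions of the four marked vertices, in the paper's indexing:
`B₁=(1,1,1,2)`, `B₂=(1,1,2,1)`, `B₃=(1,2,1,1)`, `B₄=(1,2,2,2)`, `B₅=(1,1,2,2)`,
`B₆=(1,2,1,2)`, `B₇=(1,2,2,1)`. -/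
def Bpart4 : Fin 7 → Fin 4 → Option ℕ :=
  ![![some 1, some 1, some 1, some 2],
    ![some 1, some 1, some 2, some 1],
    ![some 1, some 2, some 1, some 1],
    ![some 1, some 2, some 2, some 2],
    ![some 1, some 1, some 2, some 2],
    ![some 1, some 2, some 1, some 2],
    ![some 1, some 2, some 2, some 1]]

/-- The formal sum of `A_iB_j` monomials (an element of the vector space `V₄` with basis
the 42 monomials, recorded as its coefficient vector) determined by a list of index
pairs. -/
def mkAB (l : List (Fin 6 × Fin 7)) : Fin 6 × Fin 7 → ℚ := fun q => (l.count q : ℚ)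

/-- `L_{4,4}(1) = A₄(B₁+B₄+B₅+B₆)+A₁(B₄+B₆)+A₂(B₄+B₅)` as a formal sum. -/
def L441 : Fin 6 × Fin 7 → ℚ :=
  mkAB [(3,0),(3,3),(3,4),(3,5),(0,3),(0,5),(1,3),(1,4)]
/-- `L_{4,4}(2) = A₅(B₁+B₃+B₅+B₇)+A₁(B₃+B₇)+A₃(B₃+B₅)`. -/
def L442 : Fin 6 × Fin 7 → ℚ :=
  mkAB [(4,0),(4,2),(4,4),(4,6),(0,2),(0,6),(2,2),(2,4)]
/-- `L_{4,4}(3) = A₆(B₁+B₂+B₆+B₇)+A₂(B₂+B₇)+A₃(B₂+B₆)`. -/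
def L443 : Fin 6 × Fin 7 → ℚ :=
  mkAB [(5,0),(5,1),(5,5),(5,6),(1,1),(1,6),(2,1),(2,5)]
/-- `L_{4,3}(1) = A₂(B₂+B₄+B₅+B₇)+A₁(B₄+B₇)+A₄(B₄+B₅)`. -/
def L431 : Fin 6 × Fin 7 → ℚ :=
  mkAB [(1,1),(1,3),(1,4),(1,6),(0,3),(0,6),(3,3),(3,4)]
/-- `L_{4,3}(2) = A₃(B₂+B₃+B₅+B₆)+A₁(B₃+B₆)+A₅(B₃+B₅)`. -/
def L432 : Fin 6 × Fin 7 → ℚ :=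
  mkAB [(2,1),(2,2),(2,4),(2,5),(0,2),(0,5),(4,2),(4,4)]
/-- `L_{4,3}(3) = A₆(B₁+B₂+B₆+B₇)+A₄(B₁+B₆)+A₅(B₁+B₇)`. -/
def L433 : Fin 6 × Fin 7 → ℚ :=
  mkAB [(5,0),(5,1),(5,5),(5,6),(3,0),(3,5),(4,0),(4,6)]
/-- `L_{4,2}(1) = A₁(B₃+B₄+B₆+B₇)+A₂(B₄+B₇)+A₄(B₄+B₆)`. -/
def L421 : Fin 6 × Fin 7 → ℚ :=
  mkAB [(0,2),(0,3),(0,5),(0,6),(1,3),(1,6),(3,3),(3,5)]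
/-- `L_{4,2}(2) = A₃(B₂+B₃+B₅+B₆)+A₂(B₂+B₅)+A₆(B₂+B₆)`. -/
def L422 : Fin 6 × Fin 7 → ℚ :=
  mkAB [(2,1),(2,2),(2,4),(2,5),(1,1),(1,4),(5,1),(5,5)]
/-- `L_{4,1}(1) = A₁(B₃+B₄+B₆+B₇)+A₃(B₃+B₆)+A₅(B₃+B₇)`. -/
def L411 : Fin 6 × Fin 7 → ℚ :=
  mkAB [(0,2),(0,3),(0,5),(0,6),(2,2),(2,5),(4,2),(4,6)]
/-- `L_{4,1}(2) = A₂(B₂+B₄+B₅+B₇)+A₃(B₂+B₅)+A₆(B₂+B₇)`. -/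
def L412 : Fin 6 × Fin 7 → ℚ :=
  mkAB [(1,1),(1,3),(1,4),(1,6),(2,1),(2,4),(5,1),(5,6)]

/-- A pair `(A_i, B_j)` is *non-forbidden* if no two marked vertices lie in the same part
of both partitions. -/
def NonForbidden4 (i : Fin 6) (j : Fin 7) : Prop :=
  ∀ q q' : Fin 4, q ≠ q' → ¬(Apart4 i q = Apart4 i q' ∧ Bpart4 j q = Bpart4 j q')

instance nf4dec : ∀ i j, Decidable (NonForbidden4 i j) := fun i j => by
  unfold NonForbidden4; infer_instance

lemma mkAB_add (l l' : List (Fin 6 × Fin 7)) :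
    mkAB l + mkAB l' = mkAB (l ++ l') := by
  funext q
  simp [mkAB, List.count_append]

/-- **Block sums agree** (`m = 4`): as formal sums of `A_iB_j` monomials,
`L_{4,4}(1)+L_{4,4}(2)+L_{4,4}(3) = L_{4,3}(1)+L_{4,3}(2)+L_{4,3}(3)`, and each equals
the sum of all 24 non-forbidden monomials `A_iB_j`, each with coefficient `1`. -/
theorem block_sums_agree :
    L441 + L442 + L443 = L431 + L432 + L433 ∧
      L441 + L442 + L443 = (fun q : Fin 6 × Fin 7 =>
        letI := Classical.dec (NonForbidden4 q.1 q.2)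
        if NonForbidden4 q.1 q.2 then (1 : ℚ) else 0) := by
  have h4 : L441 + L442 + L443 =
      mkAB ([(3,0),(3,3),(3,4),(3,5),(0,3),(0,5),(1,3),(1,4)] ++
        [(4,0),(4,2),(4,4),(4,6),(0,2),(0,6),(2,2),(2,4)] ++
        [(5,0),(5,1),(5,5),(5,6),(1,1),(1,6),(2,1),(2,5)]) := by
    rw [← mkAB_add, ← mkAB_add]; rfl
  have h3 : L431 + L432 + L433 =
      mkAB ([(1,1),(1,3),(1,4),(1,6),(0,3),(0,6),(3,3),(3,4)] ++
        [(2,1),(2,2),(2,4),(2,5),(0,2),(0,5),(4,2),(4,4)] ++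
        [(5,0),(5,1),(5,5),(5,6),(3,0),(3,5),(4,0),(4,6)]) := by
    rw [← mkAB_add, ← mkAB_add]; rfl
  have key : ∀ q : Fin 6 × Fin 7,
      (([(3,0),(3,3),(3,4),(3,5),(0,3),(0,5),(1,3),(1,4)] ++
        [(4,0),(4,2),(4,4),(4,6),(0,2),(0,6),(2,2),(2,4)] ++
        [(5,0),(5,1),(5,5),(5,6),(1,1),(1,6),(2,1),(2,5)] :
          List (Fin 6 × Fin 7)).count q)
        = if NonForbidden4 q.1 q.2 then 1 else 0 := by decide
  have keq : ∀ q : Fin 6 × Fin 7,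
      (([(3,0),(3,3),(3,4),(3,5),(0,3),(0,5),(1,3),(1,4)] ++
        [(4,0),(4,2),(4,4),(4,6),(0,2),(0,6),(2,2),(2,4)] ++
        [(5,0),(5,1),(5,5),(5,6),(1,1),(1,6),(2,1),(2,5)] :
          List (Fin 6 × Fin 7)).count q)
        = (([(1,1),(1,3),(1,4),(1,6),(0,3),(0,6),(3,3),(3,4)] ++
        [(2,1),(2,2),(2,4),(2,5),(0,2),(0,5),(4,2),(4,4)] ++
        [(5,0),(5,1),(5,5),(5,6),(3,0),(3,5),(4,0),(4,6)] :
          List (Fin 6 × Fin 7)).count q) := by decide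
  constructor
  · rw [h4, h3]
    funext q
    simp only [mkAB]
    exact_mod_cast keq q
  · rw [h4]
    funext q
    simp only [mkAB, key q]
    by_cases h : NonForbidden4 q.1 q.2 <;> simp [h]
end
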